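/- arXiv:1612.03108 — 2 statements merged into one kernel-verified Lean document; each statement's English description precedes it below -/
import Mathlib

section
/- If a linear measurement map A from Hermitian n×n matrices to R^m satisfies the Frobenius-robust rank null space property with respect to the ℓ_q norm of order r with constants 0 < ρ < 1 and τ > 0 (i.e., for every Hermitian M, ‖M_r‖_F ≤ (ρ/√r)‖M_{r,c}‖_* + τ‖A(M)‖_{ℓ_q}, where M_r collects the r largest singular values and M_{r,c} the remaining ones), then for every Hermitian X of rank at most r and every Hermitian Z with A(Z) = A(X) and ‖Z‖_* ≤ ‖X‖_*, we have Z = X. (Exact recovery of rank-r matrices by nuclear norm minimization in the noiseless case.) -/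
open scoped BigOperators
open MeasureTheory Matrix
open scoped ComplexOrder

noncomputable section

namespace RT

instance {n m : ℕ} : MeasurableSpace (Matrix (Fin n) (Fin m) ℝ) :=
  inferInstanceAs (MeasurableSpace (Fin n → Fin m → ℝ))

/-- the values of a real tuple sorted in nonincreasing order -/
def sortDesc {n : ℕ} (f : Fin n → ℝ) : Fin n → ℝ :=
  fun i => - ((fun j => - f j) ∘ (Tuple.sort (fun j => - f j))) i

/-- singular values of a square complex matrix, in nonincreasing order -/
def singVals {n : ℕ} (M : Matrix (Fin n) (Fin n) ℂ) : Fin n → ℝ :=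
  sortDesc (fun i =>
    Real.sqrt ((Matrix.isHermitian_conjTranspose_mul_self M).eigenvalues i))

/-- `‖M_r‖_F`: Frobenius norm of the `r` largest singular values -/
def headFro {n : ℕ} (M : Matrix (Fin n) (Fin n) ℂ) (r : ℕ) : ℝ :=
  Real.sqrt (∑ i : Fin n, if (i : ℕ) < r then (singVals M i) ^ 2 else 0)

/-- `‖M_{r,c}‖_F`: Frobenius norm of the tail singular values -/
def tailFro {n : ℕ} (M : Matrix (Fin n) (Fin n) ℂ) (r : ℕ) : ℝ :=
  Real.sqrt (∑ i : Fin n, if r ≤ (i : ℕ) then (singVals M i) ^ 2 else 0)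

/-- `‖M_r‖_*`: sum of the `r` largest singular values -/
def headNuc {n : ℕ} (M : Matrix (Fin n) (Fin n) ℂ) (r : ℕ) : ℝ :=
  ∑ i : Fin n, if (i : ℕ) < r then singVals M i else 0

/-- `‖M_{r,c}‖_*`: sum of the singular values beyond the `r` largest -/
def tailNuc {n : ℕ} (M : Matrix (Fin n) (Fin n) ℂ) (r : ℕ) : ℝ :=
  ∑ i : Fin n, if r ≤ (i : ℕ) then singVals M i else 0

/-- nuclear norm -/
def nucNorm {n : ℕ} (M : Matrix (Fin n) (Fin n) ℂ) : ℝ :=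
  ∑ i : Fin n, singVals M i

/-- Frobenius norm -/
def froNorm {n : ℕ} (M : Matrix (Fin n) (Fin n) ℂ) : ℝ :=
  Real.sqrt (∑ i : Fin n, (singVals M i) ^ 2)

/-- `ℓ_q` norm on `ℝ^m` -/
def lqNorm {m : ℕ} (q : ℝ) (v : Fin m → ℝ) : ℝ :=
  (∑ j : Fin m, |v j| ^ q) ^ (1 / q)

/-- the Frobenius-robust rank null space property of order `r` with
constants `ρ`, `τ` with respect to `ℓ_q`, for a map on Hermitian matrices -/
def FrobRobustNSP {n m : ℕ} (A : Matrix (Fin n) (Fin n) ℂ → (Fin m → ℝ))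
    (q : ℝ) (r : ℕ) (ρ τ : ℝ) : Prop :=
  ∀ M : Matrix (Fin n) (Fin n) ℂ, M.IsHermitian →
    headFro M r ≤ (ρ / Real.sqrt r) * tailNuc M r + τ * lqNorm q (A M)

/-- rank one measurement map with real measurement vectors `a j`,
acting on complex Hermitian matrices: `X ↦ (tr(X a_j a_j^*))_j` -/
def measR {n m : ℕ} (a : Fin m → Fin n → ℝ) (X : Matrix (Fin n) (Fin n) ℂ) :
    Fin m → ℝ :=
  fun j => (Matrix.trace (X *
    Matrix.vecMulVec (fun k => (a j k : ℂ)) (fun k => (a j k : ℂ)))).re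

/-- rank one measurement map with complex measurement vectors `a j`:
`X ↦ (tr(X a_j a_j^*))_j` -/
def measC {n m : ℕ} (a : Fin m → Fin n → ℂ) (X : Matrix (Fin n) (Fin n) ℂ) :
    Fin m → ℝ :=
  fun j => (Matrix.trace (X * Matrix.vecMulVec (a j) (star (a j)))).re

/-- largest eigenvalue of a (Hermitian) matrix (junk value `0` otherwise) -/
def eigMax {𝕜 : Type*} [RCLike 𝕜] {n : ℕ} (M : Matrix (Fin n) (Fin n) 𝕜) : ℝ := by
  classical exact if h : M.IsHermitian then ⨆ i, h.eigenvalues i else 0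

/-- smallest eigenvalue of a (Hermitian) matrix (junk value `0` otherwise) -/
def eigMin {𝕜 : Type*} [RCLike 𝕜] {n : ℕ} (M : Matrix (Fin n) (Fin n) 𝕜) : ℝ := by
  classical exact if h : M.IsHermitian then ⨅ i, h.eigenvalues i else 0

/-- positive semidefinite square root (junk value `0` if not psd) -/
def psdSqrt {n : ℕ} (M : Matrix (Fin n) (Fin n) ℝ) : Matrix (Fin n) (Fin n) ℝ := by
  classical exact if h : M.PosSemidef then (h.1.eigenvectorUnitary.1 * diagonal ((↑) ∘ (√·) ∘ h.1.eigenvalues) *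
    (star h.1.eigenvectorUnitary : Matrix (Fin n) (Fin n) ℝ)) else 0

/-- the law of an `n × m` matrix with i.i.d. standard Gaussian entries -/
def gaussMatrix (n m : ℕ) : Measure (Matrix (Fin n) (Fin m) ℝ) :=
  Measure.pi fun _ : Fin n => Measure.pi fun _ : Fin m =>
    ProbabilityTheory.gaussianReal 0 1

/-- `μ` is the uniform (Haar) distribution on the Stiefel manifold `V_n^m`:
a probability measure carried by `{Q : Qᵀ Q = 1}` which is invariant under
left multiplication by orthogonal matrices. -/
def IsHaarStiefel {m n : ℕ} (μ : Measure (Matrix (Fin m) (Fin n) ℝ)) : Prop :=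
  IsProbabilityMeasure μ ∧
    μ {Q | Qᵀ * Q = 1} = 1 ∧
    ∀ O : Matrix (Fin m) (Fin m) ℝ, Oᵀ * O = 1 →
      Measure.map (fun Q => O * Q) μ = μ

end RT


instance (n m : ℕ) : MeasureTheory.IsProbabilityMeasure (RT.gaussMatrix n m) := by
  unfold RT.gaussMatrix
  exact MeasureTheory.Measure.pi.instIsProbabilityMeasure _


namespace Aux
open RT Finset Polynomial

open RT Finset

variable {n : ℕ}

lemma sortDesc_eq_comp (f : Fin n → ℝ) :
    sortDesc f = f ∘ Tuple.sort (fun j => - f j) := by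
  funext i; simp [sortDesc]

lemma sortDesc_antitone (f : Fin n → ℝ) : Antitone (sortDesc f) := by
  intro i j hij
  have h := Tuple.monotone_sort (fun j => - f j) hij
  simp only [Function.comp_apply] at h
  have : - f (Tuple.sort (fun j => -f j) i) ≤ - f (Tuple.sort (fun j => -f j) j) := h
  simp [sortDesc_eq_comp]; linarith

lemma sortDesc_comp_perm (f : Fin n → ℝ) (σ : Equiv.Perm (Fin n)) :
    sortDesc (f ∘ σ) = sortDesc f := by
  have h := Tuple.comp_perm_comp_sort_eq_comp_sort (f := fun j => - f j) (σ := σ)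
  funext i
  have := congrFun h i
  simp only [Function.comp_apply] at this
  simp only [sortDesc_eq_comp, Function.comp_apply]
  have h2 : (fun j => -f j) ∘ σ = fun j => -(f ∘ σ) j := rfl
  rw [h2] at this
  have := neg_injective this
  simpa using congrArg f (congrArg _ rfl) ▸ this

lemma monotone_unique {u v : Fin n → ℝ} (hu : Monotone u) (hv : Monotone v)
    (h : Finset.univ.val.map u = Finset.univ.val.map v) : u = v := by
  rw [Fin.univ_val_map, Fin.univ_val_map] at h
  have hperm : List.Perm (List.ofFn u) (List.ofFn v) := Quotient.exact h
  exact List.ofFn_injective (List.Perm.eq_of_sortedLE hu.sortedLE_ofFn hv.sortedLE_ofFn hperm)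

/-- sortDesc only depends on the multiset of values -/
lemma sortDesc_congr {f g : Fin n → ℝ}
    (h : Finset.univ.val.map f = Finset.univ.val.map g) : sortDesc f = sortDesc g := by
  have hmu : Monotone ((fun j => -f j) ∘ Tuple.sort (fun j => -f j)) :=
    Tuple.monotone_sort _
  have hmv : Monotone ((fun j => -g j) ∘ Tuple.sort (fun j => -g j)) :=
    Tuple.monotone_sort _
  have hms : Finset.univ.val.map ((fun j => -f j) ∘ Tuple.sort (fun j => -f j))
      = Finset.univ.val.map ((fun j => -g j) ∘ Tuple.sort (fun j => -g j)) := by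
    have e1 : ∀ (w : Fin n → ℝ) (σ : Equiv.Perm (Fin n)),
        Finset.univ.val.map (w ∘ σ) = Finset.univ.val.map w := by
      intro w σ
      rw [← Multiset.map_map]
      congr 1
      have : Finset.univ.val.map (σ : Fin n → Fin n) = (Finset.univ.map σ.toEmbedding).val := rfl
      rw [this, Finset.map_univ_equiv]
    rw [e1, e1]
    have : ∀ w : Fin n → ℝ, Finset.univ.val.map (fun j => - w j)
        = Finset.univ.val.map (Neg.neg ∘ w) := fun w => rfl
    rw [this, this, ← Multiset.map_map, ← Multiset.map_map, h]
  have := monotone_unique hmu hmv hms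
  funext i
  simp only [sortDesc]
  rw [show ((fun j => -f j) ∘ Tuple.sort fun j => -f j) = ((fun j => -g j) ∘ Tuple.sort fun j => -g j) from this]

lemma sortDesc_sum (f : Fin n → ℝ) (g : ℝ → ℝ) :
    ∑ i, g (sortDesc f i) = ∑ i, g (f i) := by
  rw [sortDesc_eq_comp]
  exact Equiv.sum_comp (Tuple.sort (fun j => - f j)) (fun i => g (f i))

lemma sortDesc_nonneg {f : Fin n → ℝ} (hf : ∀ i, 0 ≤ f i) (i : Fin n) : 0 ≤ sortDesc f i := by
  rw [sortDesc_eq_comp]; exact hf _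


open Finset
variable {n : ℕ}

lemma charpoly_diagonal (d : Fin n → ℂ) :
    (diagonal d).charpoly = ∏ i, (X - C (d i)) := by
  have h : charmatrix (diagonal d) = diagonal (fun i => X - C (d i)) := by
    ext i j
    by_cases hij : i = j
    · subst hij; simp [charmatrix_apply, diagonal_apply_eq]
    · simp [charmatrix_apply_ne _ _ _ hij, diagonal_apply_ne _ hij, diagonal_apply_ne d hij]
  rw [Matrix.charpoly, h, det_diagonal]

lemma charpoly_unitary_conj (U : Matrix.unitaryGroup (Fin n) ℂ) (A : Matrix (Fin n) (Fin n) ℂ) :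
    ((U : Matrix (Fin n) (Fin n) ℂ) * A * star (U : Matrix (Fin n) (Fin n) ℂ)).charpoly
      = A.charpoly := by
  set V : Matrix (Fin n) (Fin n) ℂ := (U : Matrix (Fin n) (Fin n) ℂ)
  set W : Matrix (Fin n) (Fin n) ℂ := star V
  have hVW : V * W = 1 := by
    simpa [V, W] using (Matrix.mem_unitaryGroup_iff).mp U.2
  have hmap : ∀ M N : Matrix (Fin n) (Fin n) ℂ,
      (M * N).map (C : ℂ → ℂ[X]) = M.map C * N.map C := by
    intro M N
    exact Matrix.map_mul
  have key : charmatrix (V * A * W) = V.map C * charmatrix A * W.map C := by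
    unfold charmatrix
    rw [Matrix.mul_sub, Matrix.sub_mul]
    congr 1
    · -- V C * scalar X * W C = scalar X
      have comm : V.map C * Matrix.scalar (Fin n) X = Matrix.scalar (Fin n) X * V.map C :=
        (Matrix.scalar_commute X (fun r => Commute.all _ _) (V.map C)).symm
      rw [comm, Matrix.mul_assoc, ← hmap, hVW, Matrix.map_one C (map_zero C) (map_one C),
        Matrix.mul_one]
    · simp only [RingHom.mapMatrix_apply]
      rw [hmap, hmap]
  rw [Matrix.charpoly, key, det_mul, det_mul]
  have h1 : (V.map C).det * (W.map C).det = 1 := by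
    rw [← det_mul, ← hmap, hVW, Matrix.map_one C (map_zero C) (map_one C), Matrix.det_one]
  calc (V.map ⇑C).det * A.charmatrix.det * (W.map ⇑C).det
      = (V.map ⇑C).det * (W.map ⇑C).det * A.charmatrix.det := by ring
    _ = A.charpoly := by rw [h1, one_mul]; rfl

lemma prod_X_sub_C_eq (c : Fin n → ℂ) :
    ∏ i, (X - C (c i)) = (Multiset.map (fun a => X - C a) (Finset.univ.val.map c)).prod := by
  rw [Multiset.map_map]
  rfl

lemma evMS_spec {A : Matrix (Fin n) (Fin n) ℂ} (hA : A.IsHermitian)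
    (U : Matrix.unitaryGroup (Fin n) ℂ) (d : Fin n → ℝ)
    (h : A = (U : Matrix (Fin n) (Fin n) ℂ) * diagonal (fun i => (d i : ℂ))
        * star (U : Matrix (Fin n) (Fin n) ℂ)) :
    Finset.univ.val.map hA.eigenvalues = Finset.univ.val.map d := by
  have h1 : A.charpoly = ∏ i, (X - C ((d i : ℂ))) := by
    rw [h, charpoly_unitary_conj, charpoly_diagonal]
  have h2 : A.charpoly = ∏ i, (X - C ((hA.eigenvalues i : ℂ))) := by
    conv_lhs => rw [hA.spectral_theorem, Unitary.conjStarAlgAut_apply]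
    have : diagonal (RCLike.ofReal ∘ hA.eigenvalues) =
        diagonal (fun i => ((hA.eigenvalues i : ℝ) : ℂ)) := rfl
    rw [this, charpoly_unitary_conj, charpoly_diagonal]
  have h3 : Finset.univ.val.map (fun i => ((hA.eigenvalues i : ℝ) : ℂ))
      = Finset.univ.val.map (fun i => ((d i : ℝ) : ℂ)) := by
    have := h2.symm.trans h1
    rw [prod_X_sub_C_eq, prod_X_sub_C_eq] at this
    have hr := congrArg Polynomial.roots this
    rwa [roots_multiset_prod_X_sub_C, roots_multiset_prod_X_sub_C] at hr
  have h4 : Multiset.map (fun x : ℝ => (x : ℂ)) (Finset.univ.val.map hA.eigenvalues)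
      = Multiset.map (fun x : ℝ => (x : ℂ)) (Finset.univ.val.map d) := by
    rw [Multiset.map_map, Multiset.map_map]
    exact h3
  exact Multiset.map_injective Complex.ofReal_injective h4

lemma trace_eq_sum_ev {A : Matrix (Fin n) (Fin n) ℂ} (hA : A.IsHermitian) :
    A.trace = ((∑ i, hA.eigenvalues i : ℝ) : ℂ) := by
  conv_lhs => rw [hA.spectral_theorem, Unitary.conjStarAlgAut_apply]
  rw [Matrix.trace_mul_cycle]
  have : star (hA.eigenvectorUnitary : Matrix (Fin n) (Fin n) ℂ)
      * (hA.eigenvectorUnitary : Matrix (Fin n) (Fin n) ℂ) = 1 := by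
    simpa using unitary.star_mul_self hA.eigenvectorUnitary
  rw [this, Matrix.one_mul, Matrix.trace_diagonal]
  push_cast
  rfl

lemma sum_of_ms_eq {f g : Fin n → ℝ}
    (h : Finset.univ.val.map f = Finset.univ.val.map g) : ∑ i, f i = ∑ i, g i := by
  have : (Finset.univ.val.map f).sum = (Finset.univ.val.map g).sum := by rw [h]
  simpa [Finset.sum] using this

lemma ms_map {f g : Fin n → ℝ} (w : ℝ → ℝ)
    (h : Finset.univ.val.map f = Finset.univ.val.map g) :
    Finset.univ.val.map (fun i => w (f i)) = Finset.univ.val.map (fun i => w (g i)) := by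
  have := congrArg (Multiset.map w) h
  rwa [Multiset.map_map, Multiset.map_map] at this

local notation "⟪" x ", " y "⟫" => @inner ℂ _ _ x y

lemma toEuclideanLin_eigen {A : Matrix (Fin n) (Fin n) ℂ} (hA : A.IsHermitian) (j : Fin n) :
    Matrix.toEuclideanLin A (hA.eigenvectorBasis j)
      = ((hA.eigenvalues j : ℂ)) • hA.eigenvectorBasis j := by
  apply PiLp.ext
  intro i
  have h := congrFun (hA.mulVec_eigenvectorBasis j) i
  show (A *ᵥ ⇑(hA.eigenvectorBasis j)) i = ((hA.eigenvalues j : ℂ) • hA.eigenvectorBasis j) i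
  rw [h]
  show (hA.eigenvalues j) • (hA.eigenvectorBasis j i) = _
  rw [PiLp.smul_apply]
  rw [smul_eq_mul, Complex.real_smul]

/-- quadratic form of a matrix at x, as the real part of the inner product -/
lemma inner_toEuclideanLin_nonneg {C : Matrix (Fin n) (Fin n) ℂ} (hC : C.PosSemidef)
    (x : EuclideanSpace ℂ (Fin n)) : 0 ≤ Complex.re ⟪x, Matrix.toEuclideanLin C x⟫ := by
  have h := hC.dotProduct_mulVec_nonneg ((WithLp.equiv 2 (Fin n → ℂ)) x)
  have heq : ⟪x, Matrix.toEuclideanLin C x⟫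
      = dotProduct (star ((WithLp.equiv 2 (Fin n → ℂ)) x))
        (C *ᵥ ((WithLp.equiv 2 (Fin n → ℂ)) x)) := by
    rw [EuclideanSpace.inner_eq_star_dotProduct, dotProduct_comm]
    rfl
  rw [heq]
  exact (RCLike.nonneg_iff.mp h).1

/-- Weyl monotonicity: if B - A is psd then sorted eigenvalues dominate -/
lemma weyl_mono {A B : Matrix (Fin n) (Fin n) ℂ} (hA : A.IsHermitian) (hB : B.IsHermitian)
    (hPSD : (B - A).PosSemidef) (i : Fin n) :
    sortDesc hA.eigenvalues i ≤ sortDesc hB.eigenvalues i := by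
  classical
  set k := (i : ℕ) with hk
  have hkn : k < n := i.isLt
  set σA := Tuple.sort (fun j => - hA.eigenvalues j) with hσA
  set σB := Tuple.sort (fun j => - hB.eigenvalues j) with hσB
  set ιA : Fin (k + 1) → Fin n := fun j => σA ⟨j.1, lt_of_le_of_lt (Nat.lt_succ_iff.mp j.2) hkn⟩
    with hιA
  set ιB : Fin k → Fin n := fun l => σB ⟨l.1, lt_trans l.2 hkn⟩ with hιB
  have hιA_inj : Function.Injective ιA := by
    intro a b hab
    have h2 := σA.injective hab
    have h3 : (a : ℕ) = (b : ℕ) := by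
      have := congrArg (fun t : Fin n => t.val) h2
      simpa using this
    exact Fin.ext h3
  set vA : Fin (k + 1) → EuclideanSpace ℂ (Fin n) := fun j => hA.eigenvectorBasis (ιA j)
  -- the coefficient-to-vector linear map
  set S : (Fin (k + 1) → ℂ) →ₗ[ℂ] EuclideanSpace ℂ (Fin n) :=
    { toFun := fun c => ∑ j, c j • vA j
      map_add' := by
        intro c d
        simp [add_smul, Finset.sum_add_distrib]
      map_smul' := by
        intro t c
        simp [smul_smul, Finset.smul_sum] } with hS
  set Φ : (Fin (k + 1) → ℂ) →ₗ[ℂ] (Fin k → ℂ) :=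
    { toFun := fun c => fun l => hB.eigenvectorBasis.repr (S c) (ιB l)
      map_add' := by
        intro c d
        funext l
        simp
      map_smul' := by
        intro t c
        funext l
        simp } with hΦ
  -- Φ is not injective
  have hnotinj : ¬ Function.Injective Φ := by
    intro hinj
    have h1 := LinearMap.finrank_le_finrank_of_injective hinj
    simp only [Module.finrank_pi, Fintype.card_fin] at h1
    omega
  obtain ⟨c1, c2, hc12, hne⟩ := Function.not_injective_iff.mp hnotinj
  set c : Fin (k + 1) → ℂ := c1 - c2 with hc
  have hc0 : c ≠ 0 := sub_ne_zero.mpr hne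
  have hΦc : Φ c = 0 := by rw [map_sub, hc12, sub_self]
  set x : EuclideanSpace ℂ (Fin n) := S c with hx
  set d : Fin n → ℂ := fun l => hB.eigenvectorBasis.repr x l with hd
  have hd0 : ∀ l : Fin k, d (ιB l) = 0 := fun l => congrFun hΦc l
  have hONA : Orthonormal ℂ vA := hA.eigenvectorBasis.orthonormal.comp ιA hιA_inj
  set N : ℝ := ∑ j, ‖c j‖ ^ 2 with hN
  have hNpos : 0 < N := by
    obtain ⟨j, hj⟩ := Function.ne_iff.mp hc0
    refine Finset.sum_pos' (fun j _ => by positivity)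
      ⟨j, Finset.mem_univ j, pow_pos (norm_pos_iff.mpr hj) 2⟩
  -- norm of x via A-coefficients
  have hxx : ⟪x, x⟫ = (N : ℂ) := by
    rw [hx]
    show ⟪∑ j, c j • vA j, ∑ j, c j • vA j⟫ = (N : ℂ)
    rw [hONA.inner_sum c c Finset.univ]
    rw [hN]
    push_cast
    congr 1
    funext j
    rw [RCLike.conj_mul]
    norm_num
  -- norm of x via B-coefficients
  have hxr : x = ∑ l, d l • hB.eigenvectorBasis l := (hB.eigenvectorBasis.sum_repr x).symm
  have hONB : Orthonormal ℂ (fun l => hB.eigenvectorBasis l) := hB.eigenvectorBasis.orthonormal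
  have hxx' : ⟪x, x⟫ = ((∑ l, ‖d l‖ ^ 2 : ℝ) : ℂ) := by
    conv_lhs => rw [hxr]
    rw [hONB.inner_sum d d Finset.univ]
    push_cast
    congr 1
    funext l
    rw [RCLike.conj_mul]
    norm_num
  have hdN : ∑ l, ‖d l‖ ^ 2 = N := by
    have := hxx'.symm.trans hxx
    exact_mod_cast this
  -- A quadratic form
  have hAx : Matrix.toEuclideanLin A x = ∑ j, (c j * (hA.eigenvalues (ιA j) : ℂ)) • vA j := by
    rw [hx]
    show Matrix.toEuclideanLin A (∑ j, c j • vA j) = _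
    rw [map_sum]
    congr 1
    funext j
    rw [LinearMap.map_smul, toEuclideanLin_eigen hA (ιA j), smul_smul, mul_comm]
  have hQA : ⟪x, Matrix.toEuclideanLin A x⟫
      = ((∑ j, ‖c j‖ ^ 2 * hA.eigenvalues (ιA j) : ℝ) : ℂ) := by
    conv_lhs => rw [hx, hAx]
    show ⟪∑ j, c j • vA j, ∑ j, (c j * (hA.eigenvalues (ιA j) : ℂ)) • vA j⟫ = _
    rw [hONA.inner_sum c _ Finset.univ]
    push_cast
    congr 1
    funext j
    rw [← mul_assoc, RCLike.conj_mul]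
    norm_num
  -- B quadratic form
  have hBx : Matrix.toEuclideanLin B x
      = ∑ l, (d l * (hB.eigenvalues l : ℂ)) • hB.eigenvectorBasis l := by
    conv_lhs => rw [hxr]
    rw [map_sum]
    congr 1
    funext l
    rw [LinearMap.map_smul, toEuclideanLin_eigen hB l, smul_smul, mul_comm]
  have hQB : ⟪x, Matrix.toEuclideanLin B x⟫
      = ((∑ l, ‖d l‖ ^ 2 * hB.eigenvalues l : ℝ) : ℂ) := by
    conv_lhs => rw [hBx, hxr]
    rw [hONB.inner_sum d _ Finset.univ]
    push_cast
    congr 1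
    funext l
    rw [← mul_assoc, RCLike.conj_mul]
    norm_num
  -- compare quadratic forms
  have hcomp : Complex.re ⟪x, Matrix.toEuclideanLin A x⟫
      ≤ Complex.re ⟪x, Matrix.toEuclideanLin B x⟫ := by
    have h0 := inner_toEuclideanLin_nonneg hPSD x
    have hsub : Matrix.toEuclideanLin (B - A) x
        = Matrix.toEuclideanLin B x - Matrix.toEuclideanLin A x := by
      rw [map_sub]
      rfl
    rw [hsub] at h0
    rw [inner_sub_right] at h0
    simp only [Complex.sub_re] at h0
    linarith
  -- lower bound for A side
  have hlbA : sortDesc hA.eigenvalues i * N ≤ ∑ j, ‖c j‖ ^ 2 * hA.eigenvalues (ιA j) := by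
    have : ∀ j : Fin (k + 1), sortDesc hA.eigenvalues i ≤ hA.eigenvalues (ιA j) := by
      intro j
      have hj : (⟨j.1, lt_of_le_of_lt (Nat.lt_succ_iff.mp j.2) hkn⟩ : Fin n) ≤ i := by
        exact Fin.mk_le_of_le_val (Nat.lt_succ_iff.mp j.2)
      have h4 := sortDesc_antitone hA.eigenvalues hj
      have h5 : sortDesc hA.eigenvalues ⟨j.1, lt_of_le_of_lt (Nat.lt_succ_iff.mp j.2) hkn⟩
          = hA.eigenvalues (ιA j) := by
        rw [sortDesc_eq_comp]; rfl
      linarith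
    calc sortDesc hA.eigenvalues i * N = ∑ j, ‖c j‖ ^ 2 * sortDesc hA.eigenvalues i := by
          rw [hN, Finset.mul_sum]
          exact Finset.sum_congr rfl fun j _ => mul_comm _ _
      _ ≤ ∑ j, ‖c j‖ ^ 2 * hA.eigenvalues (ιA j) :=
          Finset.sum_le_sum fun j _ => mul_le_mul_of_nonneg_left (this j) (by positivity)
  -- upper bound for B side
  have hubB : ∑ l, ‖d l‖ ^ 2 * hB.eigenvalues l ≤ sortDesc hB.eigenvalues i * N := by
    have hre : ∑ l, ‖d l‖ ^ 2 * hB.eigenvalues l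
        = ∑ m, ‖d (σB m)‖ ^ 2 * hB.eigenvalues (σB m) :=
      (Equiv.sum_comp σB (fun l => ‖d l‖ ^ 2 * hB.eigenvalues l)).symm
    have hre2 : (N : ℝ) = ∑ m, ‖d (σB m)‖ ^ 2 := by
      rw [← hdN]
      exact (Equiv.sum_comp σB (fun l => ‖d l‖ ^ 2)).symm
    rw [hre, hre2, Finset.mul_sum]
    apply Finset.sum_le_sum
    intro m _
    by_cases hm : m.1 < k
    · have : d (σB m) = 0 := by
        have := hd0 ⟨m.1, hm⟩
        simpa [hιB] using this
      rw [this]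
      simp
    · have him : i ≤ m := by
        rw [Fin.le_def]
        omega
      have hmono : hB.eigenvalues (σB m) ≤ sortDesc hB.eigenvalues i := by
        have h4 := sortDesc_antitone hB.eigenvalues him
        have h5 : sortDesc hB.eigenvalues m = hB.eigenvalues (σB m) := by
          rw [sortDesc_eq_comp]; rfl
        linarith
      calc ‖d (σB m)‖ ^ 2 * hB.eigenvalues (σB m)
          ≤ ‖d (σB m)‖ ^ 2 * sortDesc hB.eigenvalues i :=
            mul_le_mul_of_nonneg_left hmono (by positivity)
        _ = sortDesc hB.eigenvalues i * ‖d (σB m)‖ ^ 2 := mul_comm _ _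
  -- conclude
  have h1 : sortDesc hA.eigenvalues i * N ≤ sortDesc hB.eigenvalues i * N := by
    have e1 : Complex.re ⟪x, Matrix.toEuclideanLin A x⟫
        = ∑ j, ‖c j‖ ^ 2 * hA.eigenvalues (ιA j) := by rw [hQA, Complex.ofReal_re]
    have e2 : Complex.re ⟪x, Matrix.toEuclideanLin B x⟫
        = ∑ l, ‖d l‖ ^ 2 * hB.eigenvalues l := by rw [hQB, Complex.ofReal_re]
    linarith
  exact le_of_mul_le_mul_right h1 hNpos


variable {n : ℕ}

lemma max_sub_max_neg (a : ℝ) : max a 0 - max (-a) 0 = a := by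
  rcases le_total a 0 with h | h
  · rw [max_eq_right h, max_eq_left (by linarith)]; ring
  · rw [max_eq_left h, max_eq_right (by linarith)]; ring

lemma max_add_max_neg (a : ℝ) : max a 0 + max (-a) 0 = |a| := by
  rcases le_total a 0 with h | h
  · rw [max_eq_right h, max_eq_left (by linarith), abs_of_nonpos h]; ring
  · rw [max_eq_left h, max_eq_right (by linarith), abs_of_nonneg h]; ring

section Lidskii

variable {A B : Matrix (Fin n) (Fin n) ℂ}

lemma star_unitary (U : Matrix.unitaryGroup (Fin n) ℂ) :
    star (U : Matrix (Fin n) (Fin n) ℂ) * (U : Matrix (Fin n) (Fin n) ℂ) = 1 := by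
  simpa using unitary.star_mul_self U

/-- positive part construction -/
lemma pos_part_exists {C : Matrix (Fin n) (Fin n) ℂ} (hC : C.IsHermitian) :
    ∃ P Q : Matrix (Fin n) (Fin n) ℂ, P.PosSemidef ∧ Q.PosSemidef ∧ C = P - Q ∧
      P.trace = ((∑ i, max (hC.eigenvalues i) 0 : ℝ) : ℂ) ∧
      Q.trace = ((∑ i, max (- hC.eigenvalues i) 0 : ℝ) : ℂ) := by
  set U := hC.eigenvectorUnitary with hU
  set ev := hC.eigenvalues with hev
  set Dp : Matrix (Fin n) (Fin n) ℂ := diagonal (fun i => ((max (ev i) 0 : ℝ) : ℂ)) with hDp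
  set Dm : Matrix (Fin n) (Fin n) ℂ := diagonal (fun i => ((max (- ev i) 0 : ℝ) : ℂ)) with hDm
  have hDp_psd : Dp.PosSemidef := by
    refine posSemidef_diagonal_iff.mpr fun i => ?_
    exact_mod_cast Complex.zero_le_real.mpr (le_max_right _ _)
  have hDm_psd : Dm.PosSemidef := by
    refine posSemidef_diagonal_iff.mpr fun i => ?_
    exact_mod_cast Complex.zero_le_real.mpr (le_max_right _ _)
  refine ⟨(U : Matrix (Fin n) (Fin n) ℂ) * Dp * star (U : Matrix (Fin n) (Fin n) ℂ),
    (U : Matrix (Fin n) (Fin n) ℂ) * Dm * star (U : Matrix (Fin n) (Fin n) ℂ), ?_, ?_, ?_, ?_, ?_⟩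
  · simpa [Matrix.star_eq_conjTranspose] using hDp_psd.mul_mul_conjTranspose_same
      (U : Matrix (Fin n) (Fin n) ℂ)
  · simpa [Matrix.star_eq_conjTranspose] using hDm_psd.mul_mul_conjTranspose_same
      (U : Matrix (Fin n) (Fin n) ℂ)
  · conv_lhs => rw [hC.spectral_theorem, Unitary.conjStarAlgAut_apply]
    rw [← Matrix.sub_mul, ← Matrix.mul_sub]
    have hD : diagonal (RCLike.ofReal ∘ hC.eigenvalues) = Dp - Dm := by
      rw [hDp, hDm, diagonal_sub]
      refine congrArg Matrix.diagonal (funext fun i => ?_)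
      show (RCLike.ofReal ∘ hC.eigenvalues) i
        = ((hC.eigenvalues i ⊔ 0 : ℝ) : ℂ) - ((-hC.eigenvalues i ⊔ 0 : ℝ) : ℂ)
      rw [← Complex.ofReal_sub, max_sub_max_neg]
      rfl
    rw [hD]
  · rw [Matrix.trace_mul_cycle, star_unitary, Matrix.one_mul, Matrix.trace_diagonal]
    push_cast
    rfl
  · rw [Matrix.trace_mul_cycle, star_unitary, Matrix.one_mul, Matrix.trace_diagonal]
    push_cast
    rfl

/-- Lidskii inequality for sorted eigenvalues of Hermitian matrices -/
lemma lidskii (hA : A.IsHermitian) (hB : B.IsHermitian) :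
    ∑ i, |sortDesc hA.eigenvalues i - sortDesc hB.eigenvalues i|
      ≤ ∑ i, |(hA.sub hB).eigenvalues i| := by
  set C := A - B with hCdef
  have hC : C.IsHermitian := hA.sub hB
  obtain ⟨P, Q, hP, hQ, hPQ, htP, htQ⟩ := pos_part_exists hC
  set E := B + P with hE
  have hEherm : E.IsHermitian := hB.add hP.1
  have hEA : (E - A).PosSemidef := by
    have : E - A = Q := by
      rw [hE]
      have : A = B + C := by rw [hCdef]; abel
      rw [this, hPQ]
      abel
    rwa [this]
  have hEB : (E - B).PosSemidef := by
    have : E - B = P := by rw [hE]; abel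
    rwa [this]
  have hwA : ∀ i, sortDesc hA.eigenvalues i ≤ sortDesc hEherm.eigenvalues i :=
    fun i => weyl_mono hA hEherm hEA i
  have hwB : ∀ i, sortDesc hB.eigenvalues i ≤ sortDesc hEherm.eigenvalues i :=
    fun i => weyl_mono hB hEherm hEB i
  have habs : ∀ i, |sortDesc hA.eigenvalues i - sortDesc hB.eigenvalues i|
      ≤ (sortDesc hEherm.eigenvalues i - sortDesc hA.eigenvalues i)
        + (sortDesc hEherm.eigenvalues i - sortDesc hB.eigenvalues i) := by
    intro i
    rw [abs_sub_le_iff]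
    constructor <;> [linarith [hwB i, hwA i]; linarith [hwA i, hwB i]]
  have hsum := Finset.sum_le_sum (fun i (_ : i ∈ Finset.univ) => habs i)
  -- compute the RHS sum via traces
  have hsevA : ∑ i, sortDesc hA.eigenvalues i = ∑ i, hA.eigenvalues i := sortDesc_sum _ (fun t => t)
  have hsevB : ∑ i, sortDesc hB.eigenvalues i = ∑ i, hB.eigenvalues i := sortDesc_sum _ (fun t => t)
  have hsevE : ∑ i, sortDesc hEherm.eigenvalues i = ∑ i, hEherm.eigenvalues i :=
    sortDesc_sum _ (fun t => t)
  set tA := ∑ i, hA.eigenvalues i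
  set tB := ∑ i, hB.eigenvalues i
  set tE := ∑ i, hEherm.eigenvalues i
  set tP := ∑ i, max (hC.eigenvalues i) 0
  set tQ := ∑ i, max (- hC.eigenvalues i) 0
  have hEtrace : tE = tB + tP := by
    apply Complex.ofReal_injective
    push_cast
    rw [← trace_eq_sum_ev hEherm, ← trace_eq_sum_ev hB, ← htP, hE, Matrix.trace_add]
  have hAtrace : tA = tB + tP - tQ := by
    apply Complex.ofReal_injective
    push_cast
    rw [← trace_eq_sum_ev hA, ← trace_eq_sum_ev hB, ← htP, ← htQ]
    have : A = B + (P - Q) := by rw [← hPQ, hCdef]; abel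
    rw [this, Matrix.trace_add, Matrix.trace_sub]
    ring
  have hfinal : ∑ i, ((sortDesc hEherm.eigenvalues i - sortDesc hA.eigenvalues i)
      + (sortDesc hEherm.eigenvalues i - sortDesc hB.eigenvalues i))
      = ∑ i, |hC.eigenvalues i| := by
    rw [Finset.sum_add_distrib, Finset.sum_sub_distrib, Finset.sum_sub_distrib,
      hsevA, hsevB, hsevE]
    have : ∑ i, |hC.eigenvalues i| = tP + tQ := by
      rw [← Finset.sum_add_distrib]
      exact Finset.sum_congr rfl fun i _ => (max_add_max_neg _).symm
    rw [this]
    rw [hEtrace, hAtrace]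
    ring
  calc ∑ i, |sortDesc hA.eigenvalues i - sortDesc hB.eigenvalues i|
      ≤ ∑ i, ((sortDesc hEherm.eigenvalues i - sortDesc hA.eigenvalues i)
        + (sortDesc hEherm.eigenvalues i - sortDesc hB.eigenvalues i)) := hsum
    _ = ∑ i, |hC.eigenvalues i| := hfinal

end Lidskii

section EvMS

variable {M : Matrix (Fin n) (Fin n) ℂ}

lemma evMS_neg (hM : M.IsHermitian) :
    Finset.univ.val.map (hM.neg.eigenvalues)
      = Finset.univ.val.map (fun i => - hM.eigenvalues i) := by
  apply evMS_spec hM.neg hM.eigenvectorUnitary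
  conv_lhs => rw [show -M = -(((hM.eigenvectorUnitary : Matrix (Fin n) (Fin n) ℂ))
    * diagonal (RCLike.ofReal ∘ hM.eigenvalues)
    * star (hM.eigenvectorUnitary : Matrix (Fin n) (Fin n) ℂ)) from by conv_lhs => rw [hM.spectral_theorem, Unitary.conjStarAlgAut_apply]]
  have hD : (diagonal fun i => ((-hM.eigenvalues i : ℝ) : ℂ))
      = - diagonal (RCLike.ofReal ∘ hM.eigenvalues) := by
    ext i j
    rcases eq_or_ne i j with rfl | hij
    · simp only [diagonal_apply_eq, Matrix.neg_apply]
      push_cast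
      rfl
    · simp [Matrix.diagonal_apply_ne _ hij]
  rw [hD, Matrix.mul_neg, Matrix.neg_mul]

lemma evMS_sq (hM : M.IsHermitian) :
    Finset.univ.val.map (Matrix.isHermitian_conjTranspose_mul_self M).eigenvalues
      = Finset.univ.val.map (fun i => (hM.eigenvalues i) ^ 2) := by
  apply evMS_spec _ hM.eigenvectorUnitary
  have hMH : Mᴴ = M := hM
  rw [hMH]
  conv_lhs => rw [hM.spectral_theorem, Unitary.conjStarAlgAut_apply]
  rw [show ∀ (U D : Matrix (Fin n) (Fin n) ℂ), (U * D * star U) * (U * D * star U)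
      = U * D * (star U * U) * D * star U from fun U D => by
    simp only [Matrix.mul_assoc]]
  rw [star_unitary, Matrix.mul_one]
  rw [Matrix.mul_assoc _ _ (star _), ← Matrix.mul_assoc _ (diagonal _) _,
    Matrix.mul_assoc _ _ (diagonal _)]
  rw [diagonal_mul_diagonal]
  have hD : (diagonal fun i => (RCLike.ofReal ∘ hM.eigenvalues) i
        * (RCLike.ofReal ∘ hM.eigenvalues) i : Matrix (Fin n) (Fin n) ℂ)
      = diagonal fun i => ((hM.eigenvalues i ^ 2 : ℝ) : ℂ) := by
    refine congrArg Matrix.diagonal (funext fun i => ?_)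
    show ((hM.eigenvalues i : ℝ) : ℂ) * ((hM.eigenvalues i : ℝ) : ℂ)
      = ((hM.eigenvalues i ^ 2 : ℝ) : ℂ)
    push_cast
    ring
  rw [hD]

end EvMS

end Aux

namespace Aux
open RT Finset

variable {n : ℕ}

lemma eigenvalues_ext {A B : Matrix (Fin n) (Fin n) ℂ} (h : A = B)
    (hA : A.IsHermitian) (hB : B.IsHermitian) : hA.eigenvalues = hB.eigenvalues := by
  subst h; rfl

lemma singVals_eq_sortDesc_abs {M : Matrix (Fin n) (Fin n) ℂ} (hM : M.IsHermitian) :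
    singVals M = sortDesc (fun i => |hM.eigenvalues i|) := by
  unfold RT.singVals
  apply sortDesc_congr
  have h1 := ms_map Real.sqrt (evMS_sq hM)
  have h2 : (fun i => Real.sqrt ((hM.eigenvalues i) ^ 2)) = fun i => |hM.eigenvalues i| :=
    funext fun i => Real.sqrt_sq_eq_abs _
  calc Finset.univ.val.map (fun i =>
        Real.sqrt ((Matrix.isHermitian_conjTranspose_mul_self M).eigenvalues i))
      = Finset.univ.val.map (fun i => Real.sqrt ((hM.eigenvalues i) ^ 2)) := h1
    _ = Finset.univ.val.map (fun i => |hM.eigenvalues i|) := by rw [h2]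

lemma singVals_nonneg (M : Matrix (Fin n) (Fin n) ℂ) (i : Fin n) : 0 ≤ singVals M i :=
  sortDesc_nonneg (fun _ => Real.sqrt_nonneg _) i

lemma nucNorm_eq_sum_abs {M : Matrix (Fin n) (Fin n) ℂ} (hM : M.IsHermitian) :
    nucNorm M = ∑ i, |hM.eigenvalues i| := by
  unfold RT.nucNorm
  rw [singVals_eq_sortDesc_abs hM]
  exact sortDesc_sum _ (fun t => t)

/-- properties of the sorted eigenvalues of `-M` -/
lemma sortDesc_abs_neg_ev {M : Matrix (Fin n) (Fin n) ℂ} (hM : M.IsHermitian) :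
    sortDesc (fun i => |sortDesc hM.neg.eigenvalues i|) = singVals M := by
  set σ := Tuple.sort (fun j => - hM.neg.eigenvalues j) with hσ
  have h1 : (fun i => |sortDesc hM.neg.eigenvalues i|)
      = (fun i => |hM.neg.eigenvalues i|) ∘ σ := by
    funext i
    rw [sortDesc_eq_comp]
    rfl
  rw [h1, sortDesc_comp_perm]
  rw [singVals_eq_sortDesc_abs hM]
  apply sortDesc_congr
  have h2 := ms_map (fun t => |t|) (evMS_neg hM)
  have h3 : (fun i => |-hM.eigenvalues i|) = fun i => |hM.eigenvalues i| :=
    funext fun i => abs_neg _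
  calc Finset.univ.val.map (fun i => |hM.neg.eigenvalues i|)
      = Finset.univ.val.map (fun i => |-hM.eigenvalues i|) := h2
    _ = Finset.univ.val.map (fun i => |hM.eigenvalues i|) := by rw [h3]

lemma sum_abs_neg_ev {M : Matrix (Fin n) (Fin n) ℂ} (hM : M.IsHermitian) :
    ∑ i, |sortDesc hM.neg.eigenvalues i| = nucNorm M := by
  rw [show ∑ i, |sortDesc hM.neg.eigenvalues i| = ∑ i, |hM.neg.eigenvalues i| from
    sortDesc_sum _ (fun t => |t|)]
  rw [nucNorm_eq_sum_abs hM]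
  have h2 := sum_of_ms_eq (ms_map (fun t => |t|) (evMS_neg hM))
  simpa using h2

lemma card_support_sortDesc_le {X : Matrix (Fin n) (Fin n) ℂ} (hX : X.IsHermitian) {r : ℕ}
    (hrank : X.rank ≤ r) :
    (Finset.univ.filter (fun i => sortDesc hX.eigenvalues i ≠ 0)).card ≤ r := by
  classical
  set σ := Tuple.sort (fun j => - hX.eigenvalues j) with hσ
  have h1 : (Finset.univ.filter (fun i => sortDesc hX.eigenvalues i ≠ 0)).card
      = Fintype.card {i // hX.eigenvalues (σ i) ≠ 0} := by
    rw [Fintype.card_subtype]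
    congr 1
    apply Finset.filter_congr
    intro i _
    rw [sortDesc_eq_comp]
    rfl
  have h2 : Fintype.card {i // hX.eigenvalues (σ i) ≠ 0}
      = Fintype.card {i // hX.eigenvalues i ≠ 0} :=
    Fintype.card_congr (σ.subtypeEquiv (fun i => Iff.rfl))
  rw [h1, h2, ← hX.rank_eq_card_non_zero_eigs]
  exact hrank

lemma strictMono_nat_le {m : ℕ} {f : Fin m → ℕ} (hf : StrictMono f) (k : Fin m) :
    (k : ℕ) ≤ f k := by
  have H : ∀ j : ℕ, ∀ hj : j < m, j ≤ f ⟨j, hj⟩ := by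
    intro j
    induction j with
    | zero => intro hj; exact Nat.zero_le _
    | succ j ih =>
      intro hj
      have h1 := ih (lt_trans (Nat.lt_succ_self j) hj)
      have h2 : (⟨j, lt_trans (Nat.lt_succ_self j) hj⟩ : Fin m) < ⟨j + 1, hj⟩ := by
        simp [Fin.lt_def]
      have := hf h2
      omega
  exact H k.1 k.2

/-- sum of a nonneg function over a set of cardinality ≤ r is at most the
sum of its r largest values -/
lemma sum_subset_le_head {w : Fin n → ℝ} (hw : ∀ i, 0 ≤ w i) (S : Finset (Fin n)) (r : ℕ)
    (hS : S.card ≤ r) :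
    ∑ i ∈ S, w i ≤ ∑ i : Fin n, if (i : ℕ) < r then sortDesc w i else 0 := by
  classical
  set σ := Tuple.sort (fun j => - w j) with hσ
  set v := sortDesc w with hv
  have hvw : ∀ i, v (σ.symm i) = w i := by
    intro i
    rw [hv, sortDesc_eq_comp]
    exact congrArg w (Equiv.apply_symm_apply σ i)
  have hva : Antitone v := sortDesc_antitone w
  have hvn : ∀ i, 0 ≤ v i := fun i => sortDesc_nonneg hw i
  set T := S.image σ.symm with hT
  have hTcard : T.card = S.card := Finset.card_image_of_injective _ σ.symm.injective
  have hsum1 : ∑ i ∈ S, w i = ∑ j ∈ T, v j := by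
    rw [hT, Finset.sum_image (fun a _ b _ h => σ.symm.injective h)]
    exact (Finset.sum_congr rfl fun i _ => (hvw i).symm)
  have hTn : T.card ≤ n := le_trans (Finset.card_le_univ T) (by simp)
  have hTr : T.card ≤ r := hTcard ▸ hS
  set e := T.orderIsoOfFin rfl with he
  have hsum2 : ∑ j ∈ T, v j = ∑ k : Fin T.card, v (e k : Fin n) := by
    rw [← Finset.sum_coe_sort T v]
    exact (Equiv.sum_comp e.toEquiv (fun j : T => v (j : Fin n))).symm
  have hle : ∀ k : Fin T.card, (k : ℕ) ≤ ((e k : Fin n) : ℕ) := by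
    apply strictMono_nat_le
    intro a b hab
    have := e.strictMono hab
    exact this
  have hstep : ∀ k : Fin T.card, v (e k : Fin n) ≤ v ⟨k.1, lt_of_lt_of_le k.2 hTn⟩ := by
    intro k
    apply hva
    rw [Fin.le_def]
    exact hle k
  set F : Fin T.card → Fin n := fun k => ⟨k.1, lt_of_lt_of_le k.2 hTn⟩ with hF
  have hFinj : Function.Injective F := by
    intro a b hab
    have := congrArg (fun t : Fin n => t.val) hab
    exact Fin.ext (by simpa using this)
  have hsum3 : ∑ k : Fin T.card, v (F k) = ∑ i ∈ Finset.univ.image F, v i := by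
    rw [Finset.sum_image (fun a _ b _ h => hFinj h)]
  have hsum4 : ∑ i ∈ Finset.univ.image F, v i
      ≤ ∑ i : Fin n, if (i : ℕ) < r then v i else 0 := by
    have h1 : ∀ i ∈ Finset.univ.image F, v i = if (i : ℕ) < r then v i else 0 := by
      intro i hi
      obtain ⟨k, _, rfl⟩ := Finset.mem_image.mp hi
      rw [if_pos (lt_of_lt_of_le k.2 hTr)]
    rw [Finset.sum_congr rfl h1]
    apply Finset.sum_le_sum_of_subset_of_nonneg (Finset.subset_univ _)
    intro i _ _
    split
    · exact hvn i
    · exact le_refl 0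
  calc ∑ i ∈ S, w i = ∑ j ∈ T, v j := hsum1
    _ = ∑ k : Fin T.card, v (e k : Fin n) := hsum2
    _ ≤ ∑ k : Fin T.card, v (F k) := Finset.sum_le_sum fun k _ => hstep k
    _ = ∑ i ∈ Finset.univ.image F, v i := hsum3
    _ ≤ ∑ i : Fin n, if (i : ℕ) < r then v i else 0 := hsum4

lemma head_add_tail (M : Matrix (Fin n) (Fin n) ℂ) (r : ℕ) :
    headNuc M r + tailNuc M r = nucNorm M := by
  unfold RT.headNuc RT.tailNuc RT.nucNorm
  rw [← Finset.sum_add_distrib]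
  apply Finset.sum_congr rfl
  intro i _
  rcases lt_or_ge (i : ℕ) r with h | h
  · rw [if_pos h, if_neg (by omega)]; ring
  · rw [if_neg (by omega), if_pos h]; ring

lemma headNuc_nonneg (M : Matrix (Fin n) (Fin n) ℂ) (r : ℕ) : 0 ≤ headNuc M r :=
  Finset.sum_nonneg fun i _ => by
    split
    · exact singVals_nonneg M i
    · exact le_refl 0

lemma tailNuc_nonneg (M : Matrix (Fin n) (Fin n) ℂ) (r : ℕ) : 0 ≤ tailNuc M r :=
  Finset.sum_nonneg fun i _ => by
    split
    · exact singVals_nonneg M i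
    · exact le_refl 0

lemma headNuc_le_sqrt_headFro (M : Matrix (Fin n) (Fin n) ℂ) (r : ℕ) :
    headNuc M r ≤ Real.sqrt r * headFro M r := by
  classical
  set F := Finset.univ.filter (fun i : Fin n => (i : ℕ) < r) with hF
  have hFr : F.card ≤ r := by
    calc F.card ≤ (Finset.range r).card :=
          Finset.card_le_card_of_injOn (fun i => (i : ℕ))
            (fun i hi => Finset.mem_range.mpr (by
              simpa [hF] using hi))
            (fun a _ b _ hab => Fin.ext hab)
      _ = r := Finset.card_range r
  have h1 : headNuc M r = ∑ i ∈ F, singVals M i := by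
    unfold RT.headNuc
    rw [hF, Finset.sum_filter]
  have h2 : (headFro M r) ^ 2 = ∑ i ∈ F, (singVals M i) ^ 2 := by
    unfold RT.headFro
    rw [Real.sq_sqrt, hF, Finset.sum_filter]
    apply Finset.sum_nonneg
    intro i _
    split
    · positivity
    · exact le_refl 0
  have hCS : (∑ i ∈ F, singVals M i) ^ 2 ≤ F.card * ∑ i ∈ F, (singVals M i) ^ 2 :=
    sq_sum_le_card_mul_sum_sq
  have hhf : 0 ≤ headFro M r := Real.sqrt_nonneg _
  have hhn : 0 ≤ headNuc M r := headNuc_nonneg M r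
  have hsq : 0 ≤ ∑ i ∈ F, (singVals M i) ^ 2 :=
    Finset.sum_nonneg fun i _ => sq_nonneg _
  have h3 : (headNuc M r) ^ 2 ≤ (Real.sqrt r * headFro M r) ^ 2 := by
    rw [mul_pow, Real.sq_sqrt (Nat.cast_nonneg r), h1]
    calc (∑ i ∈ F, singVals M i) ^ 2 ≤ F.card * ∑ i ∈ F, (singVals M i) ^ 2 := hCS
      _ ≤ r * ∑ i ∈ F, (singVals M i) ^ 2 := by
          apply mul_le_mul_of_nonneg_right _ hsq
          exact_mod_cast hFr
      _ = r * (headFro M r) ^ 2 := by rw [h2]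
  have h4 : 0 ≤ Real.sqrt r * headFro M r := by positivity
  nlinarith [sq_nonneg (headNuc M r - Real.sqrt r * headFro M r),
    sq_nonneg (headNuc M r + Real.sqrt r * headFro M r)]

/-- key step: tail is dominated by head for null space elements against low-rank X -/
lemma tail_le_head {X Z : Matrix (Fin n) (Fin n) ℂ} (hX : X.IsHermitian) (hZ : Z.IsHermitian)
    {r : ℕ} (hrank : X.rank ≤ r) (hnuc : nucNorm Z ≤ nucNorm X) :
    tailNuc (Z - X) r ≤ headNuc (Z - X) r := by
  classical
  set M := Z - X with hMdef
  have hM : M.IsHermitian := hZ.sub hX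
  set f := sortDesc hX.eigenvalues with hf
  set g := sortDesc hM.neg.eigenvalues with hg
  have hLid : ∑ i, |f i - g i| ≤ ∑ i, |(hX.sub hM.neg).eigenvalues i| := lidskii hX hM.neg
  have hXmm : X - (-M) = Z := by rw [hMdef]; abel
  have hLid2 : ∑ i, |f i - g i| ≤ nucNorm Z := by
    rw [eigenvalues_ext hXmm (hX.sub hM.neg) hZ] at hLid
    rwa [← nucNorm_eq_sum_abs hZ] at hLid
  set S := Finset.univ.filter (fun i => f i ≠ 0) with hS
  have hSr : S.card ≤ r := card_support_sortDesc_le hX hrank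
  have hpt : ∀ i, |f i| + |g i| - 2 * (if i ∈ S then |g i| else 0) ≤ |f i - g i| := by
    intro i
    by_cases hi : i ∈ S
    · rw [if_pos hi]
      have := abs_sub_abs_le_abs_sub (f i) (g i)
      linarith
    · rw [if_neg hi]
      have hfi : f i = 0 := by
        by_contra hne
        exact hi (Finset.mem_filter.mpr ⟨Finset.mem_univ i, hne⟩)
      rw [hfi]
      simp
  have hsumpt := Finset.sum_le_sum (fun i (_ : i ∈ Finset.univ) => hpt i)
  have hsf : ∑ i, |f i| = nucNorm X := by
    rw [hf, show ∑ i, |sortDesc hX.eigenvalues i| = ∑ i, |hX.eigenvalues i| from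
      sortDesc_sum _ (fun t => |t|), ← nucNorm_eq_sum_abs hX]
  have hsg : ∑ i, |g i| = nucNorm M := sum_abs_neg_ev hM
  have hsS : ∑ i, (if i ∈ S then |g i| else 0) = ∑ i ∈ S, |g i| := by
    rw [Finset.sum_ite_mem]
    congr 1
    simp
  have hhead : ∑ i ∈ S, |g i| ≤ headNuc M r := by
    have h1 := sum_subset_le_head (w := fun i => |g i|) (fun i => abs_nonneg _) S r hSr
    have h2 : sortDesc (fun i => |g i|) = singVals M := sortDesc_abs_neg_ev hM
    unfold RT.headNuc
    rw [← h2]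
    exact h1
  have hineq : nucNorm X + nucNorm M - 2 * headNuc M r ≤ nucNorm X := by
    have e1 : ∑ i, (|f i| + |g i| - 2 * (if i ∈ S then |g i| else 0))
        = nucNorm X + nucNorm M - 2 * (∑ i ∈ S, |g i|) := by
      rw [Finset.sum_sub_distrib, Finset.sum_add_distrib, hsf, hsg, ← Finset.mul_sum, hsS]
    calc nucNorm X + nucNorm M - 2 * headNuc M r
        ≤ nucNorm X + nucNorm M - 2 * (∑ i ∈ S, |g i|) := by linarith
      _ = ∑ i, (|f i| + |g i| - 2 * (if i ∈ S then |g i| else 0)) := e1.symm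
      _ ≤ ∑ i, |f i - g i| := hsumpt
      _ ≤ nucNorm Z := hLid2
      _ ≤ nucNorm X := hnuc
  have := head_add_tail M r
  linarith

end Aux

theorem stmt0 {n m : ℕ} (q : ℝ) (hq : 1 ≤ q) (r : ℕ)
    (A : Matrix (Fin n) (Fin n) ℂ → (Fin m → ℝ))
    (hadd : ∀ X Y, A (X + Y) = A X + A Y)
    (hsmul : ∀ (c : ℝ) (X), A (c • X) = c • A X)
    (ρ τ : ℝ) (hρ0 : 0 < ρ) (hρ1 : ρ < 1) (hτ : 0 < τ)
    (hNSP : RT.FrobRobustNSP A q r ρ τ)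
    (X Z : Matrix (Fin n) (Fin n) ℂ) (hX : X.IsHermitian) (hZ : Z.IsHermitian)
    (hrank : X.rank ≤ r) (hAZ : A Z = A X) (hnuc : RT.nucNorm Z ≤ RT.nucNorm X) :
    Z = X := by
  classical
  set M := Z - X with hMdef
  have hM : M.IsHermitian := hZ.sub hX
  -- A M = 0
  have hAM : A M = 0 := by
    have h1 : M = Z + (-1 : ℝ) • X := by
      rw [hMdef]
      rw [neg_one_smul ℝ X]
      abel
    rw [h1, hadd, hsmul]
    funext j
    simp only [Pi.add_apply, Pi.smul_apply, smul_eq_mul, Pi.zero_apply]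
    have := congrFun hAZ j
    rw [this]
    ring
  have hq0 : q ≠ 0 := by linarith
  have hlq0 : RT.lqNorm q (A M) = 0 := by
    rw [hAM]
    unfold RT.lqNorm
    rw [show ∑ j : Fin m, |(0 : Fin m → ℝ) j| ^ q = 0 from
      Finset.sum_eq_zero fun j _ => by
        simp only [Pi.zero_apply, abs_zero]
        exact Real.zero_rpow hq0]
    exact Real.zero_rpow (one_div_ne_zero hq0)
  -- NSP gives headFro ≤ (ρ/√r) tailNuc
  have hNSPM : RT.headFro M r ≤ (ρ / Real.sqrt r) * RT.tailNuc M r := by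
    have := hNSP M hM
    rw [hlq0] at this
    linarith
  -- tail ≤ head
  have hTH : RT.tailNuc M r ≤ RT.headNuc M r := Aux.tail_le_head hX hZ hrank hnuc
  have htail0 : RT.tailNuc M r = 0 := by
    have htn : 0 ≤ RT.tailNuc M r := Aux.tailNuc_nonneg M r
    rcases Nat.eq_zero_or_pos r with hr0 | hrpos
    · -- r = 0 : head = 0
      have hhead0 : RT.headNuc M r = 0 := by
        unfold RT.headNuc
        apply Finset.sum_eq_zero
        intro i _
        rw [if_neg (by omega)]
      linarith
    · have hsr : (0 : ℝ) < Real.sqrt r := Real.sqrt_pos.mpr (by exact_mod_cast hrpos)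
      have hchain : RT.headNuc M r ≤ ρ * RT.tailNuc M r := by
        calc RT.headNuc M r ≤ Real.sqrt r * RT.headFro M r :=
              Aux.headNuc_le_sqrt_headFro M r
          _ ≤ Real.sqrt r * ((ρ / Real.sqrt r) * RT.tailNuc M r) :=
              mul_le_mul_of_nonneg_left hNSPM (le_of_lt hsr)
          _ = ρ * RT.tailNuc M r := by
              field_simp
      nlinarith
  have hheadFro0 : RT.headFro M r = 0 := by
    have h1 : RT.headFro M r ≤ 0 := by
      rw [htail0] at hNSPM
      simpa using hNSPM
    have h2 : 0 ≤ RT.headFro M r := Real.sqrt_nonneg _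
    linarith
  -- all singular values vanish
  have hsv : ∀ i, RT.singVals M i = 0 := by
    intro i
    rcases lt_or_ge (i : ℕ) r with hir | hir
    · -- from headFro
      have hsum : ∑ j : Fin n, (if (j : ℕ) < r then (RT.singVals M j) ^ 2 else 0) = 0 := by
        have hnn : 0 ≤ ∑ j : Fin n, (if (j : ℕ) < r then (RT.singVals M j) ^ 2 else 0) :=
          Finset.sum_nonneg fun j _ => by
            split
            · positivity
            · exact le_refl 0
        have := hheadFro0
        unfold RT.headFro at this
        nlinarith [Real.sq_sqrt hnn, Real.sqrt_nonneg (∑ j : Fin n,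
          (if (j : ℕ) < r then (RT.singVals M j) ^ 2 else 0))]
      have := (Finset.sum_eq_zero_iff_of_nonneg (fun j (_ : j ∈ Finset.univ) => by
        split
        · positivity
        · exact le_refl 0)).mp hsum i (Finset.mem_univ i)
      rw [if_pos hir] at this
      exact pow_eq_zero_iff two_ne_zero |>.mp this
    · -- from tail
      have := (Finset.sum_eq_zero_iff_of_nonneg (fun j (_ : j ∈ Finset.univ) => by
        split
        · exact Aux.singVals_nonneg M j
        · exact le_refl 0)).mp htail0 i (Finset.mem_univ i)
      rwa [if_pos hir] at this
  -- M = 0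
  have hMzero : M = 0 := by
    set P := Mᴴ * M with hP
    have hPh : P.IsHermitian := Matrix.isHermitian_conjTranspose_mul_self M
    have hPpsd : P.PosSemidef := Matrix.posSemidef_conjTranspose_mul_self M
    have hsumsv : ∑ i, Real.sqrt (hPh.eigenvalues i) = 0 := by
      have h1 : ∑ i, RT.singVals M i = 0 := Finset.sum_eq_zero fun i _ => hsv i
      have h2 : ∑ i, RT.singVals M i = ∑ i, Real.sqrt (hPh.eigenvalues i) := by
        unfold RT.singVals
        exact Aux.sortDesc_sum _ (fun t => t)
      linarith
    have hev0 : ∀ i, hPh.eigenvalues i = 0 := by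
      intro i
      have h3 := (Finset.sum_eq_zero_iff_of_nonneg
        (fun j (_ : j ∈ Finset.univ) => Real.sqrt_nonneg _)).mp hsumsv i (Finset.mem_univ i)
      have h4 := hPpsd.eigenvalues_nonneg i
      have := Real.sqrt_eq_zero h4 |>.mp h3
      exact this
    have hPzero : P = 0 := by
      have := hPh.spectral_theorem
      rw [show (Matrix.diagonal (RCLike.ofReal ∘ hPh.eigenvalues) : Matrix (Fin n) (Fin n) ℂ)
          = 0 from by
        rw [show (RCLike.ofReal ∘ hPh.eigenvalues : Fin n → ℂ) = fun _ => 0 from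
          funext fun i => by simp [hev0 i]]
        exact Matrix.diagonal_zero] at this
      rw [map_zero] at this
      exact this
    exact Matrix.conjTranspose_mul_self_eq_zero.mp hPzero
  have hZX : Z - X = 0 := hMzero
  exact sub_eq_zero.mp hZX
end
end

section
/- Let Q be an m×n matrix with orthonormal columns and W positive definite symmetric with κ(W)² < 2 and ‖W‖_∞² < 2. If the Gaussian-type measurement map A^{(G)} built from the rows of G = QW (scaled by √m appropriately) satisfies the Frobenius-robust rank NSP of order r w.r.t. ℓ_q with constants ρ = 1/2 and τ, then the tight-frame measurement map A^{(Q)} built from the rows of √m·Q satisfies the Frobenius-robust rank NSP of order r w.r.t. ℓ_q with constants κ(W)²/2 < 1 and 2τ. -/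
open scoped BigOperators
open MeasureTheory Matrix
open scoped ComplexOrder

noncomputable section

namespace RTAux

open RT

/-! ### sorting -/

lemma sortDesc_apply {n : ℕ} (f : Fin n → ℝ) (i : Fin n) :
    sortDesc f i = f (Tuple.sort (fun j => - f j) i) := by simp [sortDesc]

lemma sortDesc_antitone {n : ℕ} (f : Fin n → ℝ) : Antitone (sortDesc f) := by
  intro a b hab
  have h := Tuple.monotone_sort (fun j => - f j) hab
  simp only [Function.comp_apply] at h
  rw [sortDesc_apply, sortDesc_apply]; linarith

lemma sortDesc_nonneg {n : ℕ} {f : Fin n → ℝ} (hf : ∀ i, 0 ≤ f i) (i : Fin n) :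
    0 ≤ sortDesc f i := by rw [sortDesc_apply]; exact hf _

lemma sortDesc_comp {n : ℕ} (f : Fin n → ℝ) {g : ℝ → ℝ} (hg : Monotone g) :
    sortDesc (fun i => g (f i)) = fun i => g (sortDesc f i) := by
  have h1 : Monotone ((fun j => - g (f j)) ∘ Tuple.sort (fun j => - g (f j))) :=
    Tuple.monotone_sort _
  have h2 : Monotone ((fun j => - g (f j)) ∘ Tuple.sort (fun j => - f j)) := by
    intro a b hab
    have h := Tuple.monotone_sort (fun j => - f j) hab
    simp only [Function.comp_apply] at h ⊢
    have hf : f ((Tuple.sort fun j => - f j) b) ≤ f ((Tuple.sort fun j => - f j) a) := by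
      linarith
    exact neg_le_neg (hg hf)
  have h3 := Tuple.unique_monotone h1 h2
  funext i
  have h4 := congrFun h3 i
  simp only [Function.comp_apply] at h4
  rw [sortDesc_apply, sortDesc_apply]
  have h5 := neg_injective h4
  rw [h5]

/-! ### eigenvector machinery -/

variable {n : ℕ} {H : Matrix (Fin n) (Fin n) ℂ}

/-- sorted (descending) eigenvalues -/
def sEig (h : H.IsHermitian) : Fin n → ℝ := sortDesc h.eigenvalues

/-- the sorting permutation -/
def sperm (h : H.IsHermitian) : Equiv.Perm (Fin n) :=
  Tuple.sort (fun j => - h.eigenvalues j)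

lemma sEig_eq (h : H.IsHermitian) (j : Fin n) :
    sEig h j = h.eigenvalues (sperm h j) := sortDesc_apply _ _

lemma sEig_congr {M₁ M₂ : Matrix (Fin n) (Fin n) ℂ} (e : M₁ = M₂)
    (h₁ : M₁.IsHermitian) (h₂ : M₂.IsHermitian) (i : Fin n) : sEig h₁ i = sEig h₂ i := by
  subst e; rfl

/-- unsorted eigenvector as plain function -/
def evec (h : H.IsHermitian) (j : Fin n) : Fin n → ℂ := ⇑(h.eigenvectorBasis j)

lemma evec_mulVec (h : H.IsHermitian) (j : Fin n) :
    H *ᵥ evec h j = h.eigenvalues j • evec h j := h.mulVec_eigenvectorBasis j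

lemma evec_ortho (h : H.IsHermitian) (j k : Fin n) :
    dotProduct (star (evec h j)) (evec h k) = if j = k then 1 else 0 := by
  have h2 := orthonormal_iff_ite.mp h.eigenvectorBasis.orthonormal j k
  rw [EuclideanSpace.inner_eq_star_dotProduct, dotProduct_comm] at h2
  exact h2

lemma sum_dotProduct {ι : Type} [Fintype ι] (f : ι → (Fin n → ℂ)) (v : Fin n → ℂ) :
    dotProduct (∑ k, f k) v = ∑ k, dotProduct (f k) v := by
  simp only [dotProduct, Finset.sum_apply, Finset.sum_mul]; exact Finset.sum_comm

lemma dotProduct_sum' {ι : Type} [Fintype ι] (v : Fin n → ℂ) (f : ι → (Fin n → ℂ)) :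
    dotProduct v (∑ k, f k) = ∑ k, dotProduct v (f k) := by
  simp only [dotProduct, Finset.sum_apply, Finset.mul_sum]; exact Finset.sum_comm

lemma pairing (h : H.IsHermitian) {ι : Type} [Fintype ι] [DecidableEq ι] {w : ι → Fin n}
    (hw : Function.Injective w) (c d : ι → ℂ) :
    dotProduct (star (∑ k, c k • evec h (w k))) (∑ k, d k • evec h (w k))
      = ∑ k, star (c k) * d k := by
  rw [star_sum, sum_dotProduct]
  refine Finset.sum_congr rfl fun k _ => ?_
  rw [dotProduct_sum']
  have hterm : ∀ l : ι, star (c k • evec h (w k)) ⬝ᵥ (d l • evec h (w l))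
      = star (c k) * d l * (if k = l then 1 else 0) := by
    intro l
    rw [star_smul, smul_dotProduct, dotProduct_smul]
    rw [show star (c k) • d l • (star (evec h (w k)) ⬝ᵥ evec h (w l))
      = star (c k) * d l * (star (evec h (w k)) ⬝ᵥ evec h (w l)) by
        simp [smul_eq_mul, mul_assoc]]
    rw [evec_ortho, if_congr (Iff.symm hw.eq_iff) rfl rfl]
  simp only [hterm, mul_ite, mul_one, mul_zero]
  simp

/-- sorted eigenvectors -/
def svec (h : H.IsHermitian) (j : Fin n) : Fin n → ℂ := evec h (sperm h j)

lemma svec_mulVec (h : H.IsHermitian) (j : Fin n) :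
    H *ᵥ svec h j = sEig h j • svec h j := by
  rw [svec, evec_mulVec, sEig_eq]

lemma mulVec_sum {ι : Type} [Fintype ι] (A : Matrix (Fin n) (Fin n) ℂ)
    (f : ι → (Fin n → ℂ)) : A *ᵥ (∑ k, f k) = ∑ k, A *ᵥ f k := by
  funext i
  simp only [Matrix.mulVec, dotProduct, Finset.sum_apply, Finset.mul_sum]
  exact Finset.sum_comm

lemma quad_x (h : H.IsHermitian) {ι : Type} [Fintype ι] [DecidableEq ι] {u : ι → Fin n}
    (hu : Function.Injective u) (c : ι → ℂ) :
    (dotProduct (star (∑ k, c k • svec h (u k))) (∑ k, c k • svec h (u k))).re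
      = ∑ k, Complex.normSq (c k) := by
  simp only [svec]
  rw [pairing h (w := fun k => sperm h (u k)) (fun a b hab => hu ((sperm h).injective hab)) c c]
  rw [Complex.re_sum]
  refine Finset.sum_congr rfl fun k _ => ?_
  simp [Complex.star_def, ← Complex.normSq_eq_conj_mul_self]

lemma quad_H (h : H.IsHermitian) {ι : Type} [Fintype ι] [DecidableEq ι] {u : ι → Fin n}
    (hu : Function.Injective u) (c : ι → ℂ) :
    (dotProduct (star (∑ k, c k • svec h (u k))) (H *ᵥ ∑ k, c k • svec h (u k))).re
      = ∑ k, sEig h (u k) * Complex.normSq (c k) := by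
  have hmv : H *ᵥ ∑ k, c k • svec h (u k)
      = ∑ k, ((sEig h (u k) : ℂ) * c k) • svec h (u k) := by
    rw [mulVec_sum]
    refine Finset.sum_congr rfl fun k _ => ?_
    rw [Matrix.mulVec_smul, svec_mulVec]
    funext i
    simp [Complex.real_smul, mul_comm, mul_left_comm, mul_assoc]
  rw [hmv]
  simp only [svec]
  rw [pairing h (w := fun k => sperm h (u k)) (fun a b hab => hu ((sperm h).injective hab)) c
    (fun k => ((sEig h (u k) : ℂ) * c k))]
  rw [Complex.re_sum]
  refine Finset.sum_congr rfl fun k _ => ?_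
  rw [show star (c k) * ((sEig h (u k) : ℂ) * c k)
      = (sEig h (u k) : ℂ) * (star (c k) * c k) by ring]
  simp [Complex.star_def, ← Complex.normSq_eq_conj_mul_self, ← Complex.ofReal_mul]

lemma svec_lin_indep (h : H.IsHermitian) {ι : Type} [Fintype ι] [DecidableEq ι] {u : ι → Fin n}
    (hu : Function.Injective u) : LinearIndependent ℂ (fun k : ι => svec h (u k)) := by
  rw [Fintype.linearIndependent_iff]
  intro g hg k
  have h0 := quad_x h hu g
  rw [hg] at h0
  simp only [star_zero, zero_dotProduct, Complex.zero_re] at h0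
  have h1 := (Finset.sum_eq_zero_iff_of_nonneg
    (fun j _ => Complex.normSq_nonneg (g j))).mp h0.symm k (Finset.mem_univ k)
  exact Complex.normSq_eq_zero.mp h1

lemma sEig_nonneg_of_psd {K : Matrix (Fin n) (Fin n) ℂ} (hK : K.PosSemidef) (i : Fin n) :
    0 ≤ sEig hK.1 i :=
  sortDesc_nonneg (fun j => hK.eigenvalues_nonneg j) i

lemma exists_top (h : H.IsHermitian) (i : Fin n) :
    ∃ S : Submodule ℂ (Fin n → ℂ), Module.finrank ℂ S = (i : ℕ) + 1 ∧
      ∀ x ∈ S, sEig h i * (dotProduct (star x) x).re ≤ (dotProduct (star x) (H *ᵥ x)).re := by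
  have hu : Function.Injective (fun k : Set.Iic i => (k : Fin n)) := Subtype.val_injective
  refine ⟨Submodule.span ℂ (Set.range fun k : Set.Iic i => svec h k), ?_, ?_⟩
  · rw [finrank_span_eq_card (svec_lin_indep h hu)]
    simp
  · intro x hx
    obtain ⟨c, rfl⟩ := (Submodule.mem_span_range_iff_exists_fun ℂ).mp hx
    rw [quad_x h hu, quad_H h hu, Finset.mul_sum]
    refine Finset.sum_le_sum fun k _ => ?_
    exact mul_le_mul_of_nonneg_right (sortDesc_antitone _ k.2) (Complex.normSq_nonneg _)

lemma exists_bot (h : H.IsHermitian) (i : Fin n) :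
    ∃ T : Submodule ℂ (Fin n → ℂ), Module.finrank ℂ T = n - (i : ℕ) ∧
      ∀ x ∈ T, (dotProduct (star x) (H *ᵥ x)).re ≤ sEig h i * (dotProduct (star x) x).re := by
  have hu : Function.Injective (fun k : Set.Ici i => (k : Fin n)) := Subtype.val_injective
  refine ⟨Submodule.span ℂ (Set.range fun k : Set.Ici i => svec h k), ?_, ?_⟩
  · rw [finrank_span_eq_card (svec_lin_indep h hu)]
    simp
  · intro x hx
    obtain ⟨c, rfl⟩ := (Submodule.mem_span_range_iff_exists_fun ℂ).mp hx
    rw [quad_x h hu, quad_H h hu, Finset.mul_sum]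
    refine Finset.sum_le_sum fun k _ => ?_
    exact mul_le_mul_of_nonneg_right (sortDesc_antitone _ k.2) (Complex.normSq_nonneg _)

lemma re_star_dot_pos {x : Fin n → ℂ} (hx : x ≠ 0) : 0 < (dotProduct (star x) x).re := by
  have h : (dotProduct (star x) x).re = ∑ j, Complex.normSq (x j) := by
    simp [dotProduct, Complex.star_def, ← Complex.normSq_eq_conj_mul_self, Complex.re_sum]
  rw [h]
  obtain ⟨j, hj⟩ : ∃ j, x j ≠ 0 := by
    by_contra hc; push_neg at hc; exact hx (funext hc)
  exact Finset.sum_pos' (fun j _ => Complex.normSq_nonneg _)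
    ⟨j, Finset.mem_univ j, Complex.normSq_pos.mpr hj⟩

lemma exists_ne_zero_mem_inf {S T : Submodule ℂ (Fin n → ℂ)}
    (h : n < Module.finrank ℂ S + Module.finrank ℂ T) : ∃ x ∈ S ⊓ T, x ≠ 0 := by
  have hne : S ⊓ T ≠ ⊥ := by
    intro hbot
    have heq := Submodule.finrank_sup_add_finrank_inf_eq S T
    rw [hbot] at heq
    have h2 : Module.finrank ℂ ↥(S ⊔ T) ≤ n := by
      simpa [Module.finrank_fin_fun] using Submodule.finrank_le (S ⊔ T)
    simp only [finrank_bot, add_zero] at heq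
    omega
  obtain ⟨x, hx, hx0⟩ := Submodule.exists_mem_ne_zero_of_ne_bot hne
  exact ⟨x, hx, hx0⟩

lemma sEig_le_of_quad_le {K : Matrix (Fin n) (Fin n) ℂ} (hH : H.IsHermitian)
    (hK : K.IsHermitian) {c : ℝ} (hc : 0 ≤ c)
    (hpt : ∀ x : Fin n → ℂ,
      (dotProduct (star x) (H *ᵥ x)).re ≤ c * (dotProduct (star x) (K *ᵥ x)).re)
    (i : Fin n) : sEig hH i ≤ c * sEig hK i := by
  obtain ⟨S, hSrank, hSb⟩ := exists_top hH i
  obtain ⟨T, hTrank, hTb⟩ := exists_bot hK i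
  obtain ⟨x, hx, hx0⟩ := exists_ne_zero_mem_inf (S := S) (T := T)
    (by rw [hSrank, hTrank]; omega)
  have h1 := hSb x hx.1
  have h2 := hTb x hx.2
  have hp := re_star_dot_pos hx0
  have h3 := hpt x
  have h4 : sEig hH i * (dotProduct (star x) x).re
      ≤ (c * sEig hK i) * (dotProduct (star x) x).re := by nlinarith
  exact le_of_mul_le_mul_right h4 hp

lemma sEig_congr_le {K B R : Matrix (Fin n) (Fin n) ℂ} (hK : K.PosSemidef)
    (hH : (Bᴴ * K * B).IsHermitian) (hBR : B * R = 1) (hRB : R * B = 1) {c : ℝ} (hc : 0 ≤ c)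
    (hB : ∀ x : Fin n → ℂ,
      (dotProduct (star (B *ᵥ x)) (B *ᵥ x)).re ≤ c * (dotProduct (star x) x).re)
    (i : Fin n) : sEig hH i ≤ c * sEig hK.1 i := by
  obtain ⟨S, hSrank, hSb⟩ := exists_top hH i
  obtain ⟨T, hTrank, hTb⟩ := exists_bot hK.1 i
  set e : (Fin n → ℂ) ≃ₗ[ℂ] (Fin n → ℂ) := LinearEquiv.ofLinear B.mulVecLin R.mulVecLin
    (by rw [← Matrix.mulVecLin_mul, hBR, Matrix.mulVecLin_one])
    (by rw [← Matrix.mulVecLin_mul, hRB, Matrix.mulVecLin_one]) with he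
  have hT' : Module.finrank ℂ ↥(T.comap (e : (Fin n → ℂ) →ₗ[ℂ] (Fin n → ℂ))) = n - (i:ℕ) := by
    rw [Submodule.comap_equiv_eq_map_symm, LinearEquiv.finrank_map_eq]
    exact hTrank
  obtain ⟨x, hx, hx0⟩ := exists_ne_zero_mem_inf
    (S := S) (T := T.comap (e : (Fin n → ℂ) →ₗ[ℂ] (Fin n → ℂ)))
    (by rw [hSrank, hT']; omega)
  have h1 := hSb x hx.1
  have h2 : B *ᵥ x ∈ T := by
    have h2' := Submodule.mem_comap.mp (Submodule.mem_inf.mp hx).2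
    simpa [he, Matrix.mulVecLin_apply] using h2'
  have h2b := hTb _ h2
  have h3 : dotProduct (star x) ((Bᴴ * K * B) *ᵥ x)
      = dotProduct (star (B *ᵥ x)) (K *ᵥ (B *ᵥ x)) := by
    rw [← Matrix.mulVec_mulVec, ← Matrix.mulVec_mulVec, Matrix.dotProduct_mulVec,
      Matrix.star_mulVec]
  have hp := re_star_dot_pos hx0
  have hBx := hB x
  have hKnn := sEig_nonneg_of_psd hK i
  have h4 : sEig hH i * (dotProduct (star x) x).re
      ≤ (c * sEig hK.1 i) * (dotProduct (star x) x).re := by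
    rw [h3] at h1
    nlinarith
  exact le_of_mul_le_mul_right h4 hp

/-! ### singular values -/

lemma singVals_eq (M : Matrix (Fin n) (Fin n) ℂ) (i : Fin n) :
    singVals M i = Real.sqrt (sEig (Matrix.isHermitian_conjTranspose_mul_self M) i) := by
  have h := congrFun (sortDesc_comp ((Matrix.isHermitian_conjTranspose_mul_self M).eigenvalues)
    (g := Real.sqrt) (fun a b hab => Real.sqrt_le_sqrt hab)) i
  simpa [singVals, sEig] using h

lemma singVals_nonneg (M : Matrix (Fin n) (Fin n) ℂ) (i : Fin n) :
    0 ≤ singVals M i :=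
  sortDesc_nonneg (fun j => Real.sqrt_nonneg _) i

lemma singVals_conj (X V R : Matrix (Fin n) (Fin n) ℂ) (hV : V.IsHermitian)
    (hVR : V * R = 1) (hRV : R * V = 1) {c : ℝ}
    (hps : (((c^2 : ℝ) : ℂ) • (1 : Matrix (Fin n) (Fin n) ℂ) - V * V).PosSemidef)
    (i : Fin n) : singVals (V * X * V) i ≤ c^2 * singVals X i := by
  have estar : ∀ y : Fin n → ℂ,
      dotProduct (star (V *ᵥ y)) (V *ᵥ y) = dotProduct (star y) ((V * V) *ᵥ y) := by
    intro y
    rw [Matrix.star_mulVec, ← Matrix.dotProduct_mulVec, Matrix.mulVec_mulVec, hV.eq]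
  have hb : ∀ x : Fin n → ℂ,
      (dotProduct (star (V *ᵥ x)) (V *ᵥ x)).re ≤ c^2 * (dotProduct (star x) x).re := by
    intro x
    have h0 := hps.re_dotProduct_nonneg x
    rw [Matrix.sub_mulVec, dotProduct_sub, Matrix.smul_mulVec,
      Matrix.one_mulVec, dotProduct_smul] at h0
    simp only [RCLike.re_to_complex, Complex.sub_re, smul_eq_mul, Complex.mul_re,
      Complex.ofReal_re, Complex.ofReal_im, zero_mul, sub_zero] at h0
    rw [estar x]
    linarith
  have hK1 : ((V*X)ᴴ * (V*X)).PosSemidef := Matrix.posSemidef_conjTranspose_mul_self _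
  have hXX : (Xᴴ * X).PosSemidef := Matrix.posSemidef_conjTranspose_mul_self _
  have hEq1 : (V*X*V)ᴴ * (V*X*V) = Vᴴ * ((V*X)ᴴ * (V*X)) * V := by
    simp only [Matrix.conjTranspose_mul, Matrix.mul_assoc]
  have hH1 : (Vᴴ * ((V*X)ᴴ * (V*X)) * V).IsHermitian := by
    rw [← hEq1]; exact Matrix.isHermitian_conjTranspose_mul_self _
  have step1 : sEig hH1 i ≤ c^2 * sEig hK1.1 i :=
    sEig_congr_le hK1 hH1 hVR hRV (sq_nonneg c) hb i
  have step2 : sEig hK1.1 i ≤ c^2 * sEig hXX.1 i := by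
    apply sEig_le_of_quad_le hK1.1 hXX.1 (sq_nonneg c) _ i
    intro x
    have hd : (Xᴴ * ((((c^2:ℝ):ℂ)) • 1 - V * V) * X).PosSemidef :=
      hps.conjTranspose_mul_mul_same X
    have e2 : Xᴴ * ((((c^2:ℝ):ℂ)) • 1 - V * V) * X
        = (((c^2:ℝ):ℂ)) • (Xᴴ * X) - (V*X)ᴴ * (V*X) := by
      simp only [Matrix.mul_sub, Matrix.sub_mul, Matrix.conjTranspose_mul, hV.eq,
        Matrix.mul_smul, Matrix.smul_mul, Matrix.mul_one, Matrix.mul_assoc]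
    have h0 := hd.re_dotProduct_nonneg x
    rw [e2, Matrix.sub_mulVec, dotProduct_sub, Matrix.smul_mulVec,
      dotProduct_smul] at h0
    simp only [RCLike.re_to_complex, Complex.sub_re, smul_eq_mul, Complex.mul_re,
      Complex.ofReal_re, Complex.ofReal_im, zero_mul, sub_zero] at h0
    linarith
  have hfin : sEig (Matrix.isHermitian_conjTranspose_mul_self (V*X*V)) i
      ≤ (c^2)^2 * sEig (Matrix.isHermitian_conjTranspose_mul_self X) i := by
    have ha : sEig (Matrix.isHermitian_conjTranspose_mul_self (V*X*V)) i = sEig hH1 i :=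
      sEig_congr hEq1 _ _ i
    have hb2 : sEig hXX.1 i = sEig (Matrix.isHermitian_conjTranspose_mul_self X) i := rfl
    rw [ha]
    calc sEig hH1 i ≤ c^2 * sEig hK1.1 i := step1
      _ ≤ c^2 * (c^2 * sEig hXX.1 i) :=
          mul_le_mul_of_nonneg_left step2 (sq_nonneg c)
      _ = (c^2)^2 * sEig (Matrix.isHermitian_conjTranspose_mul_self X) i := by
          rw [← hb2]; ring
  rw [singVals_eq, singVals_eq]
  calc Real.sqrt (sEig (Matrix.isHermitian_conjTranspose_mul_self (V*X*V)) i)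
      ≤ Real.sqrt ((c^2)^2 * sEig (Matrix.isHermitian_conjTranspose_mul_self X) i) :=
        Real.sqrt_le_sqrt hfin
    _ = c^2 * Real.sqrt (sEig (Matrix.isHermitian_conjTranspose_mul_self X) i) := by
        rw [Real.sqrt_mul (sq_nonneg _), Real.sqrt_sq (sq_nonneg c)]

end RTAux
namespace RTAux
open RT

/-! ### real matrices: PSD constructions -/

lemma real_combo_psd {n : ℕ} {A : Matrix (Fin n) (Fin n) ℝ} (hA : A.IsHermitian)
    (s t : ℝ) (h : ∀ j, 0 ≤ s * hA.eigenvalues j ^ 2 + t) :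
    (s • (A * A) + t • (1 : Matrix (Fin n) (Fin n) ℝ)).PosSemidef := by
  set U := (hA.eigenvectorUnitary : Matrix (Fin n) (Fin n) ℝ) with hU
  have hU1 : U * star U = 1 := (Matrix.mem_unitaryGroup_iff).mp hA.eigenvectorUnitary.2
  have hU2 : star U * U = 1 := (Matrix.mem_unitaryGroup_iff').mp hA.eigenvectorUnitary.2
  set D := Matrix.diagonal ((RCLike.ofReal ∘ hA.eigenvalues : Fin n → ℝ)) with hD
  have hspec : A = U * D * star U := hA.spectral_theorem
  have hAA : A * A = U * (D * D) * star U := by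
    rw [hspec]
    calc (U * D * star U) * (U * D * star U)
        = U * (D * ((star U * U) * (D * star U))) := by simp only [Matrix.mul_assoc]
      _ = U * (D * D) * star U := by rw [hU2, Matrix.one_mul]; simp only [Matrix.mul_assoc]
  have h1 : (1 : Matrix (Fin n) (Fin n) ℝ) = U * (1 : Matrix (Fin n) (Fin n) ℝ) * star U := by
    rw [Matrix.mul_one, hU1]
  have key : s • (A * A) + t • (1 : Matrix (Fin n) (Fin n) ℝ)
      = U * Matrix.diagonal (fun j => s * hA.eigenvalues j ^ 2 + t) * star U := by
    rw [hAA]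
    conv_lhs => rw [h1]
    rw [show s • (U * (D * D) * star U) = U * (s • (D * D)) * star U by
      rw [Matrix.mul_smul, Matrix.smul_mul]]
    rw [show t • (U * (1 : Matrix (Fin n) (Fin n) ℝ) * star U)
        = U * (t • (1 : Matrix (Fin n) (Fin n) ℝ)) * star U by
      rw [Matrix.mul_smul, Matrix.smul_mul]]
    rw [← Matrix.add_mul, ← Matrix.mul_add]
    congr 2
    ext j k
    rcases eq_or_ne j k with rfl | hjk
    · simp [hD, Matrix.diagonal_mul_diagonal, sq]
    · simp [hD, Matrix.diagonal_mul_diagonal, Matrix.diagonal_apply_ne _ hjk,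
        Matrix.one_apply_ne hjk]
  rw [key]
  exact (Matrix.posSemidef_diagonal_iff.mpr h).mul_mul_conjTranspose_same U

lemma psd_map_complex {n : ℕ} {A : Matrix (Fin n) (Fin n) ℝ} (hA : A.PosSemidef) :
    (A.map (Complex.ofRealHom : ℝ →+* ℂ)).PosSemidef := by
  obtain ⟨B, hB⟩ : ∃ B : Matrix (Fin n) (Fin n) ℝ, A = Bᴴ * B := by
    open scoped MatrixOrder in
    obtain ⟨B, hB⟩ := CStarAlgebra.nonneg_iff_eq_star_mul_self.mp hA.nonneg
    exact ⟨B, hB⟩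
  rw [hB, Matrix.map_mul]
  rw [show (Bᴴ).map (Complex.ofRealHom : ℝ →+* ℂ)
      = ((B.map (Complex.ofRealHom : ℝ →+* ℂ)))ᴴ from
    Matrix.conjTranspose_map _ (fun x => (Complex.conj_ofReal x).symm)]
  exact Matrix.posSemidef_conjTranspose_mul_self _

lemma map_combo {n : ℕ} (t : ℝ) (A : Matrix (Fin n) (Fin n) ℝ) :
    (t • (1 : Matrix (Fin n) (Fin n) ℝ) - A * A).map (Complex.ofRealHom : ℝ →+* ℂ)
      = ((t : ℝ) : ℂ) • (1 : Matrix (Fin n) (Fin n) ℂ)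
        - (A.map (Complex.ofRealHom : ℝ →+* ℂ)) * (A.map (Complex.ofRealHom : ℝ →+* ℂ)) := by
  ext j k
  rcases eq_or_ne j k with rfl | hjk
  · simp [Matrix.map_apply, Matrix.mul_apply]
  · simp [Matrix.map_apply, Matrix.mul_apply, Matrix.one_apply_ne hjk]

/-! ### eigMax / eigMin -/

lemma eigMax_eq {n : ℕ} {W : Matrix (Fin n) (Fin n) ℝ} (hW : W.IsHermitian) :
    eigMax W = ⨆ j, hW.eigenvalues j := by
  unfold eigMax
  rw [dif_pos hW]

lemma eigMin_eq {n : ℕ} {W : Matrix (Fin n) (Fin n) ℝ} (hW : W.IsHermitian) :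
    eigMin W = ⨅ j, hW.eigenvalues j := by
  unfold eigMin
  rw [dif_pos hW]

end RTAux
namespace RTAux
open RT

/-! ### measurement identity -/

lemma meas_shift {m n : ℕ} (Q : Matrix (Fin m) (Fin n) ℝ) (W : Matrix (Fin n) (Fin n) ℝ)
    (hWsym : W.IsHermitian) (X : Matrix (Fin n) (Fin n) ℂ) :
    measR (fun j => Real.sqrt m • (Q * W) j) X
      = measR (fun j => Real.sqrt m • Q j)
          ((W.map (Complex.ofRealHom : ℝ →+* ℂ)) * X * (W.map (Complex.ofRealHom : ℝ →+* ℂ))) := by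
  set Wc := W.map (Complex.ofRealHom : ℝ →+* ℂ) with hWc
  funext j
  unfold measR
  congr 1
  have hsym : ∀ a k : Fin n, W a k = W k a := by
    intro a k
    conv_lhs => rw [← hWsym]
    rfl
  set u : Fin n → ℂ := fun k => (((Real.sqrt m • Q j) k : ℝ) : ℂ) with hu
  have e1 : ∀ k, (((Real.sqrt m • (Q * W) j) k : ℝ) : ℂ) = ∑ a, Wc k a * u a := by
    intro k
    simp only [Pi.smul_apply, smul_eq_mul, hu, hWc, Matrix.map_apply, Matrix.mul_apply,
      Complex.ofRealHom_eq_coe]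
    push_cast
    rw [Finset.mul_sum]
    refine Finset.sum_congr rfl fun a _ => ?_
    rw [hsym a k]
    ring
  have e2 : ∀ l, (((Real.sqrt m • (Q * W) j) l : ℝ) : ℂ) = ∑ b, u b * Wc b l := by
    intro l
    simp only [Pi.smul_apply, smul_eq_mul, hu, hWc, Matrix.map_apply, Matrix.mul_apply,
      Complex.ofRealHom_eq_coe]
    push_cast
    rw [Finset.mul_sum]
    refine Finset.sum_congr rfl fun b _ => ?_
    ring
  have hvv : Matrix.vecMulVec (fun k => (((Real.sqrt m • (Q * W) j) k : ℝ) : ℂ))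
        (fun k => (((Real.sqrt m • (Q * W) j) k : ℝ) : ℂ))
      = Wc * Matrix.vecMulVec u u * Wc := by
    ext k l
    have hR : (Wc * Matrix.vecMulVec u u * Wc) k l
        = ∑ b, (∑ a, Wc k a * (u a * u b)) * Wc b l := by
      simp [Matrix.mul_apply, Matrix.vecMulVec_apply]
    rw [hR, Matrix.vecMulVec_apply, e1 k, e2 l, Finset.mul_sum]
    refine Finset.sum_congr rfl fun b _ => ?_
    rw [Finset.sum_mul, Finset.sum_mul]
    refine Finset.sum_congr rfl fun a _ => ?_
    ring
  rw [hvv]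
  rw [show X * (Wc * Matrix.vecMulVec u u * Wc) = (X * Wc * Matrix.vecMulVec u u) * Wc by
    simp only [Matrix.mul_assoc]]
  rw [Matrix.trace_mul_comm]
  rw [show Wc * (X * Wc * Matrix.vecMulVec u u) = (Wc * X * Wc) * Matrix.vecMulVec u u by
    simp only [Matrix.mul_assoc]]

end RTAux
namespace RTAux
open RT

lemma headFro_le {n : ℕ} {M N : Matrix (Fin n) (Fin n) ℂ} {t : ℝ} (ht : 0 ≤ t)
    (hb : ∀ i, singVals M i ≤ t * singVals N i) (r : ℕ) :
    headFro M r ≤ t * headFro N r := by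
  unfold headFro
  rw [show t * Real.sqrt (∑ i : Fin n, if (i:ℕ) < r then singVals N i ^ 2 else 0)
      = Real.sqrt (t^2 * ∑ i : Fin n, if (i:ℕ) < r then singVals N i ^ 2 else 0) by
    rw [Real.sqrt_mul (sq_nonneg t), Real.sqrt_sq ht]]
  apply Real.sqrt_le_sqrt
  rw [Finset.mul_sum]
  refine Finset.sum_le_sum fun i _ => ?_
  by_cases hi : (i : ℕ) < r
  · simp only [if_pos hi]
    have h1 := hb i
    have h2 := singVals_nonneg M i
    nlinarith [singVals_nonneg N i]
  · simp [if_neg hi]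

lemma tailNuc_le {n : ℕ} {M N : Matrix (Fin n) (Fin n) ℂ} {t : ℝ}
    (hb : ∀ i, singVals M i ≤ t * singVals N i) (r : ℕ) :
    tailNuc M r ≤ t * tailNuc N r := by
  unfold tailNuc
  rw [Finset.mul_sum]
  refine Finset.sum_le_sum fun i _ => ?_
  by_cases hi : r ≤ (i : ℕ)
  · simpa [if_pos hi] using hb i
  · simp [if_neg hi]

lemma tailNuc_nonneg {n : ℕ} (M : Matrix (Fin n) (Fin n) ℂ) (r : ℕ) : 0 ≤ tailNuc M r := by
  refine Finset.sum_nonneg fun i _ => ?_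
  split
  · exact singVals_nonneg M i
  · exact le_refl 0

lemma lqNorm_nonneg {m : ℕ} (q : ℝ) (v : Fin m → ℝ) : 0 ≤ lqNorm q v :=
  Real.rpow_nonneg (Finset.sum_nonneg fun j _ => Real.rpow_nonneg (abs_nonneg _) q) _

end RTAux
theorem stmt18 {m n : ℕ} (q : ℝ) (hq : 1 ≤ q) (r : ℕ)
    (Q : Matrix (Fin m) (Fin n) ℝ) (hQ : Qᵀ * Q = 1)
    (W : Matrix (Fin n) (Fin n) ℝ) (hW : W.PosDef)
    (hκ : (RT.eigMax W / RT.eigMin W) ^ 2 < 2) (hN : (RT.eigMax W) ^ 2 < 2)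
    (τ : ℝ) (hτ : 0 < τ)
    (hG : RT.FrobRobustNSP
      (RT.measR (fun j => Real.sqrt m • (Q * W) j)) q r (1 / 2) τ) :
    RT.FrobRobustNSP (RT.measR (fun j => Real.sqrt m • Q j)) q r
      ((RT.eigMax W / RT.eigMin W) ^ 2 / 2) (2 * τ) := by
  classical
  rcases Nat.eq_zero_or_pos n with hn0 | hn
  · subst hn0
    intro M hM
    have h0 : RT.headFro M r = 0 := by simp [RT.headFro]
    have h1 : RT.tailNuc M r = 0 := by simp [RT.tailNuc]
    have hlq := RTAux.lqNorm_nonneg q (RT.measR (fun j => Real.sqrt m • Q j) M)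
    rw [h0, h1, mul_zero, zero_add]
    nlinarith [mul_nonneg hτ.le hlq]
  · haveI : Nonempty (Fin n) := ⟨⟨0, hn⟩⟩
    have hlam_pos : ∀ j, 0 < hW.1.eigenvalues j := fun j => hW.eigenvalues_pos j
    have hcq : RT.eigMax W = ⨆ j, hW.1.eigenvalues j := RTAux.eigMax_eq hW.1
    have hdq : RT.eigMin W = ⨅ j, hW.1.eigenvalues j := RTAux.eigMin_eq hW.1
    have hlam_le : ∀ j, hW.1.eigenvalues j ≤ RT.eigMax W := fun j => by
      rw [hcq]; exact le_ciSup (Set.Finite.bddAbove (Set.finite_range _)) j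
    have hd_le : ∀ j, RT.eigMin W ≤ hW.1.eigenvalues j := fun j => by
      rw [hdq]; exact ciInf_le (Set.Finite.bddBelow (Set.finite_range _)) j
    have hd_pos : 0 < RT.eigMin W := by
      rw [hdq]
      obtain ⟨j0, -, hj0⟩ := Finset.exists_min_image Finset.univ
        (fun j => hW.1.eigenvalues j) ⟨Classical.arbitrary _, Finset.mem_univ _⟩
      exact lt_of_lt_of_le (hlam_pos j0) (le_ciInf fun j => hj0 j (Finset.mem_univ j))
    have hdet : IsUnit W.det := isUnit_iff_ne_zero.mpr (ne_of_gt hW.det_pos)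
    have hWinv : W * W⁻¹ = 1 := Matrix.mul_nonsing_inv W hdet
    have hWinv' : W⁻¹ * W = 1 := Matrix.nonsing_inv_mul W hdet
    have hWih : (W⁻¹)ᴴ = W⁻¹ := by rw [Matrix.conjTranspose_nonsing_inv, hW.1.eq]
    -- real PSD facts
    have hP1 : ((RT.eigMax W ^ 2) • (1 : Matrix (Fin n) (Fin n) ℝ) - W * W).PosSemidef := by
      have h := RTAux.real_combo_psd hW.1 (-1) (RT.eigMax W ^ 2)
        (fun j => by nlinarith [hlam_le j, hlam_pos j])
      have e : (-1 : ℝ) • (W * W) + (RT.eigMax W ^ 2) • (1 : Matrix (Fin n) (Fin n) ℝ)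
          = (RT.eigMax W ^ 2) • (1 : Matrix (Fin n) (Fin n) ℝ) - W * W := by
        rw [neg_one_smul, neg_add_eq_sub]
      rwa [e] at h
    have hP2pre : (((RT.eigMin W)⁻¹ ^ 2) • (W * W)
        + (-1 : ℝ) • (1 : Matrix (Fin n) (Fin n) ℝ)).PosSemidef := by
      refine RTAux.real_combo_psd hW.1 _ _ (fun j => ?_)
      have h1 : RT.eigMin W ^ 2 ≤ hW.1.eigenvalues j ^ 2 := by nlinarith [hd_le j, hd_pos]
      have h2 : (RT.eigMin W)⁻¹ ^ 2 * RT.eigMin W ^ 2 = 1 := by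
        field_simp
      nlinarith [mul_le_mul_of_nonneg_left h1 (sq_nonneg ((RT.eigMin W)⁻¹))]
    have e1 : W⁻¹ * (W * W) * W⁻¹ = 1 := by
      calc W⁻¹ * (W * W) * W⁻¹ = (W⁻¹ * W) * (W * W⁻¹) := by simp only [Matrix.mul_assoc]
        _ = 1 := by rw [hWinv', hWinv, Matrix.one_mul]
    have hP2 : (((RT.eigMin W)⁻¹ ^ 2) • (1 : Matrix (Fin n) (Fin n) ℝ)
        - W⁻¹ * W⁻¹).PosSemidef := by
      have h := hP2pre.conjTranspose_mul_mul_same (W⁻¹)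
      have key : (W⁻¹)ᴴ * (((RT.eigMin W)⁻¹ ^ 2) • (W * W)
            + (-1 : ℝ) • (1 : Matrix (Fin n) (Fin n) ℝ)) * W⁻¹
          = ((RT.eigMin W)⁻¹ ^ 2) • (1 : Matrix (Fin n) (Fin n) ℝ) - W⁻¹ * W⁻¹ := by
        rw [hWih]
        simp only [Matrix.mul_add, Matrix.add_mul, Matrix.mul_smul, Matrix.smul_mul,
          Matrix.mul_one]
        rw [e1, neg_one_smul, ← sub_eq_add_neg]
      rwa [key] at h
    -- complex versions
    have hP1c : (((RT.eigMax W ^ 2 : ℝ) : ℂ) • (1 : Matrix (Fin n) (Fin n) ℂ)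
        - (W.map (Complex.ofRealHom : ℝ →+* ℂ)) * (W.map (Complex.ofRealHom : ℝ →+* ℂ))).PosSemidef := by
      have h := RTAux.psd_map_complex hP1
      rwa [RTAux.map_combo] at h
    have hP2c : ((((RT.eigMin W)⁻¹ ^ 2 : ℝ) : ℂ) • (1 : Matrix (Fin n) (Fin n) ℂ)
        - ((W⁻¹).map (Complex.ofRealHom : ℝ →+* ℂ)) * ((W⁻¹).map (Complex.ofRealHom : ℝ →+* ℂ))).PosSemidef := by
      have h := RTAux.psd_map_complex hP2
      rwa [RTAux.map_combo] at h
    set Vc := W.map (Complex.ofRealHom : ℝ →+* ℂ) with hVc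
    set Rc := (W⁻¹).map (Complex.ofRealHom : ℝ →+* ℂ) with hRc
    have hVcH : Vc.IsHermitian := by
      show Vcᴴ = Vc
      rw [hVc, ← Matrix.conjTranspose_map (⇑(Complex.ofRealHom : ℝ →+* ℂ))
        (fun x => (Complex.conj_ofReal x).symm), hW.1.eq]
    have hRcH : Rc.IsHermitian := by
      show Rcᴴ = Rc
      rw [hRc, ← Matrix.conjTranspose_map (⇑(Complex.ofRealHom : ℝ →+* ℂ))
        (fun x => (Complex.conj_ofReal x).symm), hWih]
    have hVR : Vc * Rc = 1 := by
      rw [hVc, hRc, ← Matrix.map_mul, hWinv]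
      exact Matrix.map_one _ (map_zero _) (map_one _)
    have hRV : Rc * Vc = 1 := by
      rw [hVc, hRc, ← Matrix.map_mul, hWinv']
      exact Matrix.map_one _ (map_zero _) (map_one _)
    intro M hM
    set N := Rc * M * Rc with hNdef
    have hMeq : Vc * N * Vc = M := by
      rw [hNdef]
      calc Vc * (Rc * M * Rc) * Vc = (Vc * Rc) * (M * (Rc * Vc)) := by
            simp only [Matrix.mul_assoc]
        _ = M := by rw [hVR, hRV, Matrix.one_mul, Matrix.mul_one]
    have hNh : N.IsHermitian := by
      show Nᴴ = N
      rw [hNdef]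
      simp only [Matrix.conjTranspose_mul, hRcH.eq, hM.eq]
      simp only [Matrix.mul_assoc]
    have hMN : ∀ i, RT.singVals M i ≤ (RT.eigMax W)^2 * RT.singVals N i := by
      intro i
      have h := RTAux.singVals_conj N Vc Rc hVcH hVR hRV (c := RT.eigMax W) hP1c i
      rwa [hMeq] at h
    have hNM : ∀ i, RT.singVals N i ≤ ((RT.eigMin W)⁻¹)^2 * RT.singVals M i := by
      intro i
      have h := RTAux.singVals_conj M Rc Vc hRcH hRV hVR (c := (RT.eigMin W)⁻¹) hP2c i
      rwa [← hNdef] at h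
    have hhead : RT.headFro M r ≤ (RT.eigMax W)^2 * RT.headFro N r :=
      RTAux.headFro_le (sq_nonneg _) hMN r
    have htail : RT.tailNuc N r ≤ ((RT.eigMin W)⁻¹)^2 * RT.tailNuc M r :=
      RTAux.tailNuc_le hNM r
    have hGN := hG N hNh
    have hlqe : RT.lqNorm q (RT.measR (fun j => Real.sqrt m • (Q*W) j) N)
        = RT.lqNorm q (RT.measR (fun j => Real.sqrt m • Q j) M) := by
      rw [RTAux.meas_shift Q W hW.1 N, ← hVc, hMeq]
    rw [hlqe] at hGN
    set L := RT.lqNorm q (RT.measR (fun j => Real.sqrt m • Q j) M) with hL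
    have hLnn : 0 ≤ L := RTAux.lqNorm_nonneg q _
    have htnn : 0 ≤ RT.tailNuc M r := RTAux.tailNuc_nonneg M r
    have hsnn : (0:ℝ) ≤ 1 / 2 / Real.sqrt r :=
      div_nonneg (by norm_num) (Real.sqrt_nonneg _)
    calc RT.headFro M r ≤ (RT.eigMax W)^2 * RT.headFro N r := hhead
      _ ≤ (RT.eigMax W)^2 * (1 / 2 / Real.sqrt r * RT.tailNuc N r + τ * L) :=
          mul_le_mul_of_nonneg_left hGN (sq_nonneg _)
      _ = (RT.eigMax W)^2 * (1 / 2 / Real.sqrt r) * RT.tailNuc N r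
          + (RT.eigMax W)^2 * (τ * L) := by ring
      _ ≤ (RT.eigMax W)^2 * (1 / 2 / Real.sqrt r) * (((RT.eigMin W)⁻¹)^2 * RT.tailNuc M r)
          + 2 * τ * L := by
          refine add_le_add (mul_le_mul_of_nonneg_left htail ?_) ?_
          · exact mul_nonneg (sq_nonneg _) hsnn
          · nlinarith [mul_nonneg hτ.le hLnn]
      _ = (RT.eigMax W / RT.eigMin W) ^ 2 / 2 / Real.sqrt r * RT.tailNuc M r + 2 * τ * L := by
          ring
end
end
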